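/- arXiv:2208.03539 — 3 statements merged into one kernel-verified Lean document; each statement's English description precedes it below -/
import Mathlib

section
/- Fix a positive integer m and work in the polynomial ring ℤ[α] in the countably many indeterminates α_m, α_{m+1}, α_{m+2}, …. Let Λ^{(m)} = (λ_{i,j})_{i,j∈ℕ} be the upper-triangular matrix with λ_{0,j} = 1, λ_{i,j} = Σ_{j ≥ ℓ_1 ≥ ⋯ ≥ ℓ_i ≥ i} ∏_{k=1}^{i} α_{k·m+ℓ_k} for 1 ≤ i ≤ j, and λ_{i,j} = 0 for i > j. Then Λ^{(m)} is totally positive with respect to the coefficientwise order on ℤ[α]: for every p ≥ 1 and all strictly increasing tuples of row indices i_1 < ⋯ < i_p and column indices j_1 < ⋯ < j_p in ℕ, every coefficient of the polynomial det((λ_{i_a, j_b})_{1≤a,b≤p}) ∈ ℤ[α] is a nonnegative integer. -/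
open Finset

/-- The entries `λ_{i,j}` of the upper-triangular matrix `Λ^{(m)}` over `ℤ[α]`
(the polynomial ring `MvPolynomial ℕ ℤ`, where the variable `X i` stands for `α_i`):
`λ_{0,j} = 1` and, for `i ≥ 1`,
`λ_{i,j} = Σ_{j ≥ ℓ_1 ≥ ⋯ ≥ ℓ_i ≥ i} ∏_{k=1}^{i} α_{k·m+ℓ_k}` (an empty sum, hence `0`,
when `i > j`). -/
noncomputable def lamEntry (m : ℕ) (i j : ℕ) : MvPolynomial ℕ ℤ :=
  if i = 0 then 1
  else
    ∑ ℓ ∈ Finset.univ.filter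
        (fun ℓ : Fin i → Fin (j + 1) =>
          (∀ k l : Fin i, k ≤ l → (ℓ l : ℕ) ≤ (ℓ k : ℕ)) ∧ ∀ k : Fin i, i ≤ (ℓ k : ℕ)),
      ∏ k : Fin i, MvPolynomial.X (((k : ℕ) + 1) * m + (ℓ k : ℕ))

namespace TP

open MvPolynomial Matrix

def NN (P : MvPolynomial ℕ ℤ) : Prop := ∀ d, 0 ≤ P.coeff d

lemma NN_zero : NN 0 := fun d => by simp
lemma NN_one : NN 1 := fun d => by rw [coeff_one]; split <;> norm_num
lemma NN_X (n : ℕ) : NN (X n) := fun d => by classical rw [coeff_X']; split <;> norm_num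
lemma NN_add {P Q} (hP : NN P) (hQ : NN Q) : NN (P + Q) := fun d => by
  rw [coeff_add]; exact add_nonneg (hP d) (hQ d)
lemma NN_mul {P Q} (hP : NN P) (hQ : NN Q) : NN (P * Q) := fun d => by
  classical
  rw [coeff_mul]
  exact Finset.sum_nonneg fun x _ => mul_nonneg (hP _) (hQ _)
lemma NN_sum {ι : Type*} (s : Finset ι) (f : ι → MvPolynomial ℕ ℤ) (h : ∀ i ∈ s, NN (f i)) :
    NN (∑ i ∈ s, f i) := fun d => by
  rw [MvPolynomial.coeff_sum]
  exact Finset.sum_nonneg fun i hi => h i hi d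
lemma NN_rename {f : ℕ → ℕ} (hf : Function.Injective f) {P} (hP : NN P) :
    NN (rename f P) := fun d => by
  by_cases h : coeff d (rename f P) = 0
  · rw [h]
  · obtain ⟨u, hu, -⟩ := coeff_rename_ne_zero f P d h
    rw [← hu, coeff_rename_mapDomain f hf]
    exact hP u

/-- ℕ-valued reformulation of `lamEntry`. -/
noncomputable def lamE (m i j : ℕ) : MvPolynomial ℕ ℤ :=
  ∑ ℓ ∈ (Fintype.piFinset fun _ : Fin i => Finset.Icc i j).filter
      (fun ℓ : Fin i → ℕ => ∀ k l : Fin i, k ≤ l → ℓ l ≤ ℓ k),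
    ∏ k : Fin i, X (((k : ℕ) + 1) * m + ℓ k)

lemma lamE_zero (m j : ℕ) : lamE m 0 j = 1 := by
  unfold lamE
  rw [Finset.filter_true_of_mem (fun ℓ _ => fun k => k.elim0)]
  rw [Finset.sum_congr rfl (fun ℓ _ => by rw [Finset.univ_eq_empty, Finset.prod_empty])]
  rw [Finset.sum_const, Fintype.card_piFinset]
  simp

lemma lamEntry_eq (m i j : ℕ) : lamEntry m i j = lamE m i j := by
  unfold lamEntry
  split
  · next h => subst h; rw [lamE_zero]
  · next h =>
    refine Finset.sum_nbij' (fun ℓ k => (ℓ k : ℕ)) (fun ℓ' k => ⟨min (ℓ' k) j, by omega⟩)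
      ?_ ?_ ?_ ?_ ?_
    · intro ℓ hℓ
      simp only [Finset.mem_filter, Finset.mem_univ, true_and] at hℓ
      simp only [Finset.mem_filter, Fintype.mem_piFinset, Finset.mem_Icc]
      exact ⟨fun k => ⟨hℓ.2 k, Nat.lt_succ_iff.mp (ℓ k).isLt⟩, hℓ.1⟩
    · intro ℓ' hℓ'
      simp only [Finset.mem_filter, Finset.mem_univ, true_and]
      simp only [Finset.mem_filter, Fintype.mem_piFinset, Finset.mem_Icc] at hℓ'
      constructor
      · intro k l hkl
        have h1 := hℓ'.1 k; have h2 := hℓ'.1 l; have := hℓ'.2 k l hkl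
        show min (ℓ' l) j ≤ min (ℓ' k) j
        omega
      · intro k; have h1 := hℓ'.1 k
        show i ≤ min (ℓ' k) j
        omega
    · intro ℓ hℓ
      simp only [Finset.mem_filter, Finset.mem_univ, true_and] at hℓ
      funext k
      have : (ℓ k : ℕ) ≤ j := Nat.lt_succ_iff.mp (ℓ k).isLt
      ext; simp [min_eq_left this]
    · intro ℓ' hℓ'
      simp only [Finset.mem_filter, Fintype.mem_piFinset, Finset.mem_Icc] at hℓ'
      funext k
      have := (hℓ'.1 k).2
      simp [min_eq_left this]
    · intro ℓ hℓ; rfl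

lemma lamE_eq_zero (m i j : ℕ) (hi : 1 ≤ i) (hj : j < i) : lamE m i j = 0 := by
  unfold lamE
  rw [Finset.filter_false_of_mem, Finset.sum_empty]
  intro ℓ hℓ
  simp only [Fintype.mem_piFinset, Finset.mem_Icc] at hℓ
  have := hℓ ⟨0, hi⟩
  intro _
  omega

lemma lamE_rec (m i j : ℕ) :
    lamE m (i + 1) j =
      ∑ t ∈ Finset.Icc (i + 1) j, X (m + t) * rename (· + (m + 1)) (lamE m i (t - 1)) := by
  rw [show lamE m (i+1) j = ∑ ℓ ∈ _, _ from rfl]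
  rw [← Finset.sum_fiberwise_of_maps_to (g := fun ℓ : Fin (i+1) → ℕ => ℓ 0)
    (t := Finset.Icc (i+1) j) (fun ℓ hℓ => by
      simp only [Finset.mem_filter, Fintype.mem_piFinset, Finset.mem_Icc] at hℓ
      simp only [Finset.mem_Icc]
      exact hℓ.1 0)]
  refine Finset.sum_congr rfl fun t ht => ?_
  simp only [Finset.mem_Icc] at ht
  -- expand rename of lamE
  rw [lamE, map_sum, Finset.mul_sum]
  simp only [map_prod, rename_X]
  refine Finset.sum_nbij' (fun ℓ k => ℓ k.succ - 1)
    (fun ℓ' => Fin.cases t (fun k => ℓ' k + 1)) ?_ ?_ ?_ ?_ ?_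
  · intro ℓ hℓ
    simp only [Finset.mem_filter, Fintype.mem_piFinset, Finset.mem_Icc] at hℓ ⊢
    obtain ⟨⟨hmem, hanti⟩, h0⟩ := hℓ
    constructor
    · intro k
      have h1 := hmem k.succ
      have h2 := hanti 0 k.succ (Fin.zero_le _)
      omega
    · intro k l hkl
      have h1 := hanti k.succ l.succ (by simpa using hkl)
      have h2 := hmem k.succ
      have h3 := hmem l.succ
      omega
  · intro ℓ' hℓ'
    simp only [Finset.mem_filter, Fintype.mem_piFinset, Finset.mem_Icc] at hℓ' ⊢
    obtain ⟨hmem, hanti⟩ := hℓ'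
    refine ⟨⟨?_, ?_⟩, ?_⟩
    · intro k
      induction k using Fin.cases with
      | zero => simp; omega
      | succ k => have := hmem k; simp; omega
    · intro k l hkl
      induction l using Fin.cases with
      | zero =>
        have : k = 0 := le_antisymm hkl (Fin.zero_le _)
        subst this; exact le_refl _
      | succ l =>
        induction k using Fin.cases with
        | zero =>
          have := hmem l; simp; omega
        | succ k =>
          have hkl' : k ≤ l := by rwa [Fin.succ_le_succ_iff] at hkl
          have := hanti k l hkl'
          simp; omega
    · simp
  · intro ℓ hℓ
    simp only [Finset.mem_filter, Fintype.mem_piFinset, Finset.mem_Icc] at hℓ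
    obtain ⟨⟨hmem, hanti⟩, h0⟩ := hℓ
    funext k
    induction k using Fin.cases with
    | zero => simpa using h0.symm
    | succ k => have := hmem k.succ; simp; omega
  · intro ℓ' hℓ'
    funext k; simp
  · intro ℓ hℓ
    simp only [Finset.mem_filter, Fintype.mem_piFinset, Finset.mem_Icc] at hℓ
    obtain ⟨⟨hmem, hanti⟩, h0⟩ := hℓ
    rw [Fin.prod_univ_succ]
    congr 1
    · rw [h0]; norm_num
    · refine Finset.prod_congr rfl fun k _ => ?_
      have hk := (hmem k.succ).1
      obtain ⟨x, hx⟩ : ∃ x, ℓ k.succ = x + 1 := ⟨ℓ k.succ - 1, by omega⟩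
      simp only [hx, Nat.add_sub_cancel]
      congr 1
      simp only [Fin.val_succ]
      ring

noncomputable def Cent (m i ℓ : ℕ) : MvPolynomial ℕ ℤ :=
  if i = 0 then (if ℓ = 0 then 1 else 0)
  else if 1 ≤ ℓ ∧ i ≤ ℓ then X (m + ℓ) * rename (· + (m + 1)) (lamE m (i - 1) (ℓ - 1)) else 0

lemma lamE_eq_sum_Cent (m i j : ℕ) : lamE m i j = ∑ ℓ ∈ Finset.Iic j, Cent m i ℓ := by
  cases i with
  | zero =>
    rw [lamE_zero]
    rw [Finset.sum_congr rfl (fun ℓ _ => show Cent m 0 ℓ = if ℓ = 0 then 1 else 0 by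
      unfold Cent; rw [if_pos rfl])]
    rw [Finset.sum_ite_eq' (Finset.Iic j) 0 (fun _ => (1 : MvPolynomial ℕ ℤ))]
    simp
  | succ i =>
    rw [lamE_rec]
    rw [Finset.sum_congr rfl (fun ℓ _ => show Cent m (i+1) ℓ =
        if 1 ≤ ℓ ∧ i + 1 ≤ ℓ then X (m + ℓ) * rename (· + (m + 1)) (lamE m i (ℓ - 1)) else 0 by
      unfold Cent
      rw [if_neg (Nat.succ_ne_zero i)]
      simp)]
    rw [← Finset.sum_filter]
    congr 1
    ext ℓ
    simp only [Finset.mem_filter, Finset.mem_Iic, Finset.mem_Icc]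
    omega

lemma Cent_pos_entry (m : ℕ) {i ℓ : ℕ} (hi : 1 ≤ i) (hℓ : 1 ≤ ℓ) :
    Cent m i ℓ = X (m + ℓ) * rename (· + (m + 1)) (lamE m (i - 1) (ℓ - 1)) := by
  unfold Cent
  rw [if_neg (by omega)]
  by_cases h : i ≤ ℓ
  · rw [if_pos ⟨hℓ, h⟩]
  · rw [if_neg (by tauto), lamE_eq_zero m (i-1) (ℓ-1) (by omega) (by omega)]
    simp

lemma det_Cent (m q : ℕ) (r' g : Fin q → ℕ) (hr : ∀ x, 1 ≤ r' x) (hg : ∀ y, 1 ≤ g y) :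
    Matrix.det (Matrix.of fun x y => Cent m (r' x) (g y)) =
      (∏ y, X (m + g y)) *
        rename (· + (m + 1))
          (Matrix.det (Matrix.of fun x y : Fin q => lamE m (r' x - 1) (g y - 1))) := by
  have h1 : (Matrix.of fun x y => Cent m (r' x) (g y)) =
      Matrix.of fun x y => X (m + g y) *
        ((Matrix.of fun x y : Fin q => lamE m (r' x - 1) (g y - 1)).map
          (rename (· + (m + 1))).toRingHom) x y := by
    refine Matrix.ext fun x y => ?_
    simp only [Matrix.of_apply, Matrix.map_apply, AlgHom.coe_toRingHom]
    exact Cent_pos_entry m (hr x) (hg y)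
  rw [h1, Matrix.det_mul_row]
  congr 1
  exact ((rename (· + (m + 1)) : MvPolynomial ℕ ℤ →ₐ[ℤ] MvPolynomial ℕ ℤ).toRingHom.map_det
    (Matrix.of fun x y : Fin q => lamE m (r' x - 1) (g y - 1))).symm

/-- lower bounds for the disjoint column blocks -/
def pb {p : ℕ} (cj : Fin p → ℕ) (y : Fin p) : ℕ :=
  if h : (y : ℕ) = 0 then 0 else cj ⟨(y : ℕ) - 1, by omega⟩ + 1

/-- multilinear expansion of the determinant along column decompositions -/
lemma det_sum_cols {p : ℕ} (B : Fin p → Finset ℕ) (C : Fin p → ℕ → MvPolynomial ℕ ℤ) :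
    (Matrix.of fun x y => ∑ ℓ ∈ B y, C x ℓ).det
      = ∑ r ∈ Fintype.piFinset B, (Matrix.of fun x y : Fin p => C x (r y)).det := by
  have key := (Matrix.detRowAlternating (R := MvPolynomial ℕ ℤ)
      (n := Fin p)).toMultilinearMap.map_sum_finset (fun y ℓ => fun x => C x ℓ) B
  have e1 : (fun y => ∑ ℓ ∈ B y, fun x => C x ℓ)
      = (Matrix.of fun x y => ∑ ℓ ∈ B y, C x ℓ)ᵀ := by
    funext y x
    simp [Finset.sum_apply]
  rw [e1] at key
  rw [← Matrix.det_transpose]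
  rw [show ((Matrix.of fun x y => ∑ ℓ ∈ B y, C x ℓ)ᵀ).det
    = Matrix.detRowAlternating.toMultilinearMap ((Matrix.of fun x y => ∑ ℓ ∈ B y, C x ℓ)ᵀ)
    from rfl]
  rw [key]
  refine Finset.sum_congr rfl fun r hr => ?_
  rw [← Matrix.det_transpose (Matrix.of fun x y : Fin p => C x (r y))]
  rfl

/-- The telescoping matrix `T` with ones on the diagonal and `-1` on the superdiagonal. -/
noncomputable def Tmat (p : ℕ) : Matrix (Fin p) (Fin p) (MvPolynomial ℕ ℤ) :=
  Matrix.of fun a y =>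
    (if a = y then 1 else 0) - (if (a : ℕ) + 1 = (y : ℕ) then 1 else 0)

lemma det_Tmat (p : ℕ) : (Tmat p).det = 1 := by
  have h : (Tmat p).BlockTriangular id := by
    intro i j hij
    have hij' : (j : ℕ) < (i : ℕ) := hij
    unfold Tmat
    simp only [Matrix.of_apply]
    rw [if_neg (by intro h; subst h; omega), if_neg (by omega), sub_zero]
  rw [Matrix.det_of_upperTriangular h]
  refine Finset.prod_eq_one fun i _ => ?_
  unfold Tmat
  simp

lemma det_expand (m p : ℕ) (ri cj : Fin p → ℕ) (hcj : StrictMono cj) :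
    (Matrix.of fun x y => lamE m (ri x) (cj y)).det
      = ∑ r ∈ Fintype.piFinset (fun y => Finset.Ico (pb cj y) (cj y + 1)),
          (Matrix.of fun x y : Fin p => Cent m (ri x) (r y)).det := by
  have hMT : (Matrix.of fun x y => lamE m (ri x) (cj y)) * Tmat p
      = Matrix.of fun x y => ∑ ℓ ∈ Finset.Ico (pb cj y) (cj y + 1), Cent m (ri x) ℓ := by
    refine Matrix.ext fun x y => ?_
    rw [Matrix.mul_apply]
    simp only [Matrix.of_apply]
    have expand : ∀ a : Fin p,
        lamE m (ri x) (cj a) * Tmat p a y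
          = (if a = y then lamE m (ri x) (cj a) else 0)
            - (if (a : ℕ) + 1 = (y : ℕ) then lamE m (ri x) (cj a) else 0) := by
      intro a
      unfold Tmat
      simp only [Matrix.of_apply, mul_sub, mul_ite, mul_one, mul_zero]
    rw [Finset.sum_congr rfl fun a _ => expand a, Finset.sum_sub_distrib]
    simp only [Finset.sum_ite_eq', Finset.mem_univ, if_true]
    by_cases hy : (y : ℕ) = 0
    · have h2 : ∀ a : Fin p, ¬((a : ℕ) + 1 = (y : ℕ)) := by intro a; omega
      rw [Finset.sum_congr rfl fun a _ => if_neg (h2 a), Finset.sum_const_zero, sub_zero]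
      rw [lamE_eq_sum_Cent]
      refine Finset.sum_congr ?_ (fun _ _ => rfl)
      unfold pb
      rw [dif_pos hy]
      ext ℓ
      simp only [Finset.mem_Iic, Finset.mem_Ico]
      omega
    · -- y has a predecessor
      set y' : Fin p := ⟨(y : ℕ) - 1, by omega⟩ with hy'
      have h2 : ∀ a : Fin p, ((a : ℕ) + 1 = (y : ℕ)) ↔ a = y' := by
        intro a
        constructor
        · intro h; apply Fin.ext; simp [hy']; omega
        · intro h; subst h; simp [hy']; omega
      have h3 : ∀ a : Fin p, (if (a : ℕ) + 1 = (y : ℕ) then lamE m (ri x) (cj a) else 0)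
          = (if a = y' then lamE m (ri x) (cj a) else 0) := fun a => by
        by_cases h : a = y'
        · rw [if_pos h, if_pos ((h2 a).mpr h)]
        · rw [if_neg (fun hh => h ((h2 a).mp hh)), if_neg h]
      rw [Finset.sum_congr rfl fun a _ => h3 a]
      simp only [Finset.sum_ite_eq', Finset.mem_univ, if_true]
      rw [lamE_eq_sum_Cent, lamE_eq_sum_Cent]
      have hle : cj y' ≤ cj y := hcj.monotone (Fin.le_def.mpr (Nat.sub_le _ _))
      rw [← Finset.sum_sdiff (Finset.Iic_subset_Iic.mpr hle)]
      rw [add_sub_cancel_right]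
      refine Finset.sum_congr ?_ (fun _ _ => rfl)
      have hpb : pb cj y = cj y' + 1 := by unfold pb; rw [dif_neg hy]
      rw [hpb]
      ext ℓ
      simp only [Finset.mem_sdiff, Finset.mem_Iic, Finset.mem_Ico]
      omega
  calc (Matrix.of fun x y => lamE m (ri x) (cj y)).det
      = ((Matrix.of fun x y => lamE m (ri x) (cj y)) * Tmat p).det := by
        rw [Matrix.det_mul, det_Tmat, mul_one]
    _ = _ := by rw [hMT, det_sum_cols]

lemma NN_prod {ι : Type} (s : Finset ι) (f : ι → MvPolynomial ℕ ℤ)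
    (h : ∀ i ∈ s, NN (f i)) : NN (∏ i ∈ s, f i) :=
  Finset.prod_induction f NN (fun _ _ ha hb => NN_mul ha hb) NN_one h

lemma step (m q μ : ℕ)
    (ih : ∀ p (ri cj : Fin p → ℕ), StrictMono ri → StrictMono cj →
      p + ∑ x, ri x ≤ μ → NN (Matrix.of fun x y => lamE m (ri x) (cj y)).det)
    (r' g : Fin q → ℕ) (hr' : StrictMono r') (hg : StrictMono g)
    (h1 : ∀ x, 1 ≤ r' x) (h2 : ∀ y, 1 ≤ g y) (hμ : ∑ x, r' x ≤ μ) :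
    NN (Matrix.of fun x y : Fin q => Cent m (r' x) (g y)).det := by
  rw [det_Cent m q r' g h1 h2]
  refine NN_mul (NN_prod _ _ fun y _ => NN_X _) (NN_rename (add_left_injective (m + 1)) ?_)
  have heq : ∑ x : Fin q, (r' x - 1 + 1) = ∑ x : Fin q, r' x :=
    Finset.sum_congr rfl fun x _ => by have := h1 x; omega
  rw [Finset.sum_add_distrib, Finset.sum_const, Finset.card_univ, Fintype.card_fin,
    smul_eq_mul, mul_one] at heq
  refine ih q (fun x => r' x - 1) (fun y => g y - 1) ?_ ?_ ?_
  · intro a b hab; show r' a - 1 < r' b - 1; have := hr' hab; have := h1 a; omega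
  · intro a b hab; show g a - 1 < g b - 1; have := hg hab; have := h2 a; omega
  · show q + ∑ x : Fin q, (r' x - 1) ≤ μ
    omega

lemma main (m : ℕ) : ∀ μ p : ℕ, ∀ ri cj : Fin p → ℕ, StrictMono ri → StrictMono cj →
    p + ∑ x, ri x ≤ μ → NN (Matrix.of fun x y => lamE m (ri x) (cj y)).det := by
  intro μ
  induction μ with
  | zero =>
    intro p ri cj _ _ hμ
    have hp : p = 0 := by omega
    subst hp
    rw [Matrix.det_fin_zero]
    exact NN_one
  | succ μ ih =>
    intro p ri cj hri hcj hμ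
    cases p with
    | zero => rw [Matrix.det_fin_zero]; exact NN_one
    | succ q =>
      rw [det_expand m (q + 1) ri cj hcj]
      refine NN_sum _ _ fun r hr => ?_
      simp only [Fintype.mem_piFinset, Finset.mem_Ico] at hr
      have hrmono : StrictMono r := by
        rw [Fin.strictMono_iff_lt_succ]
        intro i
        have ha := (hr i.castSucc).2
        have hb := (hr i.succ).1
        have hpb : pb cj i.succ = cj i.castSucc + 1 := by
          unfold pb
          rw [dif_neg (by simp)]
          exact congrArg (fun t => cj t + 1)
            ((Fin.ext (by simp) : (⟨((i.succ : Fin (q+1)) : ℕ) - 1, by omega⟩ : Fin (q + 1)) = i.castSucc))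
        omega
      by_cases h0 : ri 0 = 0
      · by_cases hr0 : r 0 = 0
        · -- first row and column collapse
          have hA : ∀ y : Fin (q + 1), Cent m (ri 0) (r y) = if y = 0 then 1 else 0 := by
            intro y
            rw [h0]
            unfold Cent
            rw [if_pos rfl]
            by_cases hy : y = 0
            · rw [if_pos hy, if_pos (by rw [hy, hr0])]
            · rw [if_neg hy, if_neg ?_]
              have : r 0 < r y := hrmono (by
                rcases Fin.pos_iff_ne_zero.mpr hy with h
                exact h)
              omega
          have hcollapse : (Matrix.of fun x y : Fin (q + 1) => Cent m (ri x) (r y)).det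
              = (Matrix.of fun x y : Fin q => Cent m (ri x.succ) (r y.succ)).det := by
            rw [Matrix.det_succ_row_zero]
            rw [Finset.sum_eq_single 0]
            · simp only [Matrix.of_apply, hA 0, if_pos rfl, Fin.val_zero, pow_zero, one_mul,
                Fin.succAbove_zero]
              rw [if_pos trivial, one_mul]
              rfl
            · intro b _ hb
              simp only [Matrix.of_apply, hA b, if_neg hb, mul_zero, zero_mul]
            · intro h; exact absurd (Finset.mem_univ 0) h
          rw [hcollapse]
          have hsum : ∑ x : Fin (q + 1), ri x = ri 0 + ∑ x : Fin q, ri x.succ :=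
            Fin.sum_univ_succ ri
          refine step m q μ ih (fun x => ri x.succ) (fun y => r y.succ)
            (hri.comp (Fin.strictMono_succ)) (hrmono.comp (Fin.strictMono_succ))
            (fun x => by show 1 ≤ ri x.succ; have := hri (Fin.succ_pos x); omega)
            (fun y => by show 1 ≤ r y.succ; have := hrmono (Fin.succ_pos y); omega) ?_
          show ∑ x : Fin q, ri x.succ ≤ μ
          omega
        · -- zero row
          intro d
          have hz : (Matrix.of fun x y : Fin (q + 1) => Cent m (ri x) (r y)).det = 0 :=
            Matrix.det_eq_zero_of_row_eq_zero 0 (fun y => by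
              simp only [Matrix.of_apply, h0]
              unfold Cent
              rw [if_pos rfl, if_neg (by
                have : r 0 ≤ r y := hrmono.monotone (Fin.zero_le y)
                omega)])
          rw [hz]
          simp
      · by_cases hr0 : r 0 = 0
        · -- zero column
          intro d
          have hz : (Matrix.of fun x y : Fin (q + 1) => Cent m (ri x) (r y)).det = 0 :=
            Matrix.det_eq_zero_of_column_eq_zero 0 (fun x => by
              simp only [Matrix.of_apply, hr0]
              unfold Cent
              rw [if_neg (by
                  have h1 : 1 ≤ ri 0 := Nat.pos_of_ne_zero h0
                  have := hri.monotone (Fin.zero_le x)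
                  omega),
                if_neg (by omega)])
          rw [hz]
          simp
        · refine step m (q + 1) μ ih ri r hri hrmono
            (fun x => by
              have h1 : 1 ≤ ri 0 := Nat.pos_of_ne_zero h0
              have := hri.monotone (Fin.zero_le x); omega)
            (fun y => by
              have h1 : 1 ≤ r 0 := Nat.pos_of_ne_zero hr0
              have := hrmono.monotone (Fin.zero_le y); omega) ?_
          omega

end TP

/-- The matrix `Λ^{(m)}` is coefficientwise totally positive over `ℤ[α]`: every minor
(with rows and columns chosen in strictly increasing order) is a polynomial with
nonnegative coefficients. -/
theorem stmt1 (m : ℕ) (hm : 0 < m) (p : ℕ) (hp : 1 ≤ p)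
    (ri cj : Fin p → ℕ) (hri : StrictMono ri) (hcj : StrictMono cj) (d : ℕ →₀ ℕ) :
    0 ≤ MvPolynomial.coeff d
        (Matrix.det (Matrix.of fun x y : Fin p => lamEntry m (ri x) (cj y))) := by
  have h := TP.main m (p + ∑ x, ri x) p ri cj hri hcj le_rfl
  have he : (Matrix.of fun x y : Fin p => lamEntry m (ri x) (cj y))
      = (Matrix.of fun x y => TP.lamE m (ri x) (cj y)) := by
    refine Matrix.ext fun x y => ?_
    simp only [Matrix.of_apply]
    exact TP.lamEntry_eq m (ri x) (cj y)
  rw [he]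
  exact h d
end

section
/- Let r ≥ s ≥ 0 with r ≥ 1, let 1 ≤ λ_1 < ⋯ < λ_s ≤ r be integers, and let a_1, …, a_{r+1}, b_1, …, b_s be positive real numbers (with b_s ≠ 1 in the case λ_s = r, so that all coefficients below are defined). For k ≥ −1 set a_i^{(k)} = a_i + ⌈(k+1−i)/(r+1)⌉ and b_j^{(k)} = b_j + ⌈(k+1−λ_j)/r⌉, and for k ∈ ℕ define α_{k+r} by: α_{k+r} = ∏_{1≤i≤r+1, i≠[k]_{r+1}} a_i^{(k)} / ∏_{j=1}^{s} b_j^{(k)} if [k]_r ∉ {λ_1,…,λ_s}, and α_{k+r} = (b_ℓ^{(k)} − a_{[k]_{r+1}}^{(k)}) ∏_{1≤i≤r+1, i≠[k]_{r+1}} a_i^{(k)} / ( (b_ℓ^{(k)} − 1) ∏_{j=1}^{s} b_j^{(k)} ) if [k]_r = λ_ℓ. Then α_{k+r} ≥ 0 for all k ∈ ℕ if and only if: (i) for all 1 ≤ i ≤ r+1 and 1 ≤ j ≤ s, b_j ≥ a_i when i ≤ λ_j and b_j ≥ a_i − 1 when i ≥ λ_j + 1; and (ii) when λ_s = r, (b_s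 − a_{r+1})/(b_s − 1) ≥ 0. Moreover, α_{k+r} > 0 for all k ∈ ℕ if and only if all the inequalities in (i) and (ii) are strict. -/
open Finset Polynomial

/-- The shifted numerator parameters `a_i^{(k)} = a_i + ⌈(k+1−i)/(r+1)⌉`. -/
noncomputable def aShift (r : ℕ) (a : ℕ → ℝ) (k : ℤ) (i : ℕ) : ℝ :=
  a i + ((⌈((k + 1 - (i : ℤ) : ℤ) : ℚ) / ((r : ℚ) + 1)⌉ : ℤ) : ℝ)

/-- The shifted denominator parameters `b_j^{(k)} = b_j + ⌈(k+1−λ_j)/r⌉`. -/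
noncomputable def bShift (r : ℕ) (lam : ℕ → ℕ) (b : ℕ → ℝ) (k : ℤ) (j : ℕ) : ℝ :=
  b j + ((⌈((k + 1 - (lam j : ℤ) : ℤ) : ℚ) / (r : ℚ)⌉ : ℤ) : ℝ)

/-- `[k]_n`, the unique element of `{1,…,n}` congruent to `k` modulo `n`. -/
def modIdx (k n : ℕ) : ℕ := ((((k : ℤ) - 1) % (n : ℤ)) + 1).toNat

section AuxStmt10

lemma ceil_div_nonneg' (n : ℕ) (hn : 1 ≤ n) (p : ℤ) (h : -(n:ℤ) < p) :
    0 ≤ ⌈((p:ℚ)) / (n:ℚ)⌉ := by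
  have hn' : (0:ℚ) < n := by exact_mod_cast hn
  have h' : (-(n:ℤ) : ℚ) < (p:ℚ) := by exact_mod_cast h
  have : (-1 : ℤ) < ⌈((p:ℚ)) / (n:ℚ)⌉ := by
    rw [Int.lt_ceil, lt_div_iff₀ hn']
    push_cast
    push_cast at h'
    linarith
  omega

lemma ceil_div_exact' (n : ℕ) (hn : 1 ≤ n) (d : ℤ) :
    ⌈((d * n + 1 : ℤ) : ℚ) / (n : ℚ)⌉ = d + 1 := by
  have hn' : (0:ℚ) < n := by exact_mod_cast hn
  have h1 : ((d * n + 1 : ℤ) : ℚ) / (n : ℚ) = 1/(n:ℚ) + (d:ℚ) := by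
    field_simp; push_cast; ring
  rw [h1, Int.ceil_add_intCast]
  have : ⌈(1/(n:ℚ))⌉ = 1 := by
    rw [Int.ceil_eq_iff]
    refine ⟨by push_cast; norm_num; positivity, ?_⟩
    push_cast
    rw [div_le_one hn']
    exact_mod_cast hn
  omega

lemma modIdx_spec' (k n : ℕ) (hn : 1 ≤ n) :
    1 ≤ modIdx k n ∧ modIdx k n ≤ n ∧ (n:ℤ) ∣ (k : ℤ) - modIdx k n := by
  have hn' : (0:ℤ) < n := by exact_mod_cast hn
  have h0 : 0 ≤ ((k:ℤ) - 1) % n := Int.emod_nonneg _ (by omega)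
  have h1 : ((k:ℤ) - 1) % n < n := Int.emod_lt_of_pos _ hn'
  have hcast : (modIdx k n : ℤ) = ((k:ℤ) - 1) % n + 1 := by
    unfold modIdx; omega
  refine ⟨by omega, by omega, ?_⟩
  rw [hcast]
  have := Int.mul_ediv_add_emod ((k:ℤ) - 1) n
  exact ⟨((k:ℤ)-1)/n, by omega⟩

lemma modIdx_eq' (k n c : ℕ) (hn : 1 ≤ n) (hc1 : 1 ≤ c) (hc2 : c ≤ n)
    (h : (n:ℤ) ∣ (k:ℤ) - c) : modIdx k n = c := by
  obtain ⟨h1, h2, h3⟩ := modIdx_spec' k n hn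
  have hd : (n:ℤ) ∣ ((modIdx k n : ℤ) - c) := by
    have h4 := Int.dvd_sub h h3
    have he : (k:ℤ) - c - ((k:ℤ) - modIdx k n) = (modIdx k n : ℤ) - c := by ring
    rwa [he] at h4
  have : (modIdx k n : ℤ) - c = 0 := by
    apply Int.eq_zero_of_abs_lt_dvd hd
    rw [abs_lt]
    omega
  omega

lemma aShift_pos' (r : ℕ) (a : ℕ → ℝ) (k : ℕ) (i : ℕ) (hi1 : 1 ≤ i) (hi2 : i ≤ r + 1)
    (hai : 0 < a i) : 0 < aShift r a (k : ℤ) i := by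
  unfold aShift
  have h1 := ceil_div_nonneg' (r+1) (by omega) ((k:ℤ)+1-(i:ℤ)) (by push_cast; omega)
  have h3 : (((k:ℤ)+1-(i:ℤ) : ℤ) : ℚ) / ((r:ℚ)+1) = (((k:ℤ)+1-(i:ℤ) : ℤ) : ℚ) / (((r+1:ℕ)):ℚ) := by
    push_cast; ring_nf
  rw [h3]
  have h4 : (0:ℝ) ≤ ((⌈(((k:ℤ)+1-(i:ℤ) : ℤ) : ℚ) / (((r+1:ℕ)):ℚ)⌉ : ℤ) : ℝ) := by
    exact_mod_cast h1
  linarith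

lemma bShift_pos' (r : ℕ) (hr : 1 ≤ r) (lam : ℕ → ℕ) (b : ℕ → ℝ) (k j : ℕ)
    (h1 : 1 ≤ lam j) (h2 : lam j ≤ r) (hb : 0 < b j) : 0 < bShift r lam b (k : ℤ) j := by
  unfold bShift
  have hc := ceil_div_nonneg' r hr ((k:ℤ)+1-(lam j:ℤ)) (by push_cast; omega)
  have h4 : (0:ℝ) ≤ ((⌈(((k:ℤ)+1-(lam j:ℤ) : ℤ) : ℚ) / ((r:ℕ):ℚ)⌉ : ℤ) : ℝ) := by
    exact_mod_cast hc
  linarith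

lemma bShift_eval' (r : ℕ) (hr : 1 ≤ r) (lam : ℕ → ℕ) (b : ℕ → ℝ) (k : ℤ) (ℓ : ℕ) (t : ℤ)
    (h : k - lam ℓ = t * r) : bShift r lam b k ℓ = b ℓ + ((t:ℝ) + 1) := by
  unfold bShift
  rw [show k + 1 - (lam ℓ:ℤ) = t * r + 1 by linarith]
  rw [ceil_div_exact' r hr t]
  push_cast; ring

lemma aShift_eval' (r : ℕ) (a : ℕ → ℝ) (k : ℤ) (i : ℕ) (m : ℤ)
    (h : k - i = m * ((r:ℤ)+1)) : aShift r a k i = a i + ((m:ℝ) + 1) := by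
  unfold aShift
  have h2 := ceil_div_exact' (r+1) (by omega) m
  have h3 : ((m * ((r:ℤ)+1) + 1 : ℤ) : ℚ) / ((r:ℚ)+1)
      = ((m * (((r+1:ℕ)):ℤ) + 1 : ℤ) : ℚ) / (((r+1:ℕ)):ℚ) := by
    push_cast; ring_nf
  rw [show k + 1 - (i:ℤ) = m * ((r:ℤ)+1) + 1 by linarith, h3, h2]
  push_cast; ring

end AuxStmt10

/-- Necessary and sufficient conditions for nonnegativity (resp. positivity) of all
branched-continued-fraction coefficients `α_{k+r}` (case `r ≥ s`, positive parameters):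
`α_{k+r} ≥ 0` for all `k` iff `b_j ≥ a_i` for `i ≤ λ_j`, `b_j ≥ a_i − 1` for `i ≥ λ_j+1`,
and `(b_s − a_{r+1})/(b_s − 1) ≥ 0` when `λ_s = r`; and `α_{k+r} > 0` for all `k` iff all
those inequalities are strict. -/
theorem stmt10 (r s : ℕ) (hr : 1 ≤ r) (hs : s ≤ r)
    (lam : ℕ → ℕ)
    (hlam1 : ∀ j, 1 ≤ j → j ≤ s → 1 ≤ lam j ∧ lam j ≤ r)
    (hlam2 : ∀ j j', 1 ≤ j → j < j' → j' ≤ s → lam j < lam j')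
    (a b : ℕ → ℝ)
    (ha : ∀ i, 1 ≤ i → i ≤ r + 1 → 0 < a i)
    (hbpos : ∀ j, 1 ≤ j → j ≤ s → 0 < b j)
    (hbs : 1 ≤ s → lam s = r → b s ≠ 1)
    (α : ℕ → ℝ)
    (hα1 : ∀ k : ℕ, (∀ ℓ, 1 ≤ ℓ → ℓ ≤ s → modIdx k r ≠ lam ℓ) →
      α (k + r) =
        (∏ i ∈ (Finset.Icc 1 (r + 1)).erase (modIdx k (r + 1)), aShift r a (k : ℤ) i) /
          ∏ j ∈ Finset.Icc 1 s, bShift r lam b (k : ℤ) j)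
    (hα2 : ∀ k ℓ, 1 ≤ ℓ → ℓ ≤ s → modIdx k r = lam ℓ →
      α (k + r) =
        ((bShift r lam b (k : ℤ) ℓ - aShift r a (k : ℤ) (modIdx k (r + 1))) *
            ∏ i ∈ (Finset.Icc 1 (r + 1)).erase (modIdx k (r + 1)), aShift r a (k : ℤ) i) /
          ((bShift r lam b (k : ℤ) ℓ - 1) *
            ∏ j ∈ Finset.Icc 1 s, bShift r lam b (k : ℤ) j)) :
    ((∀ k : ℕ, 0 ≤ α (k + r)) ↔
      ((∀ i j, 1 ≤ i → i ≤ r + 1 → 1 ≤ j → j ≤ s →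
          (i ≤ lam j → a i ≤ b j) ∧ (lam j + 1 ≤ i → a i - 1 ≤ b j)) ∧
        (1 ≤ s → lam s = r → 0 ≤ (b s - a (r + 1)) / (b s - 1)))) ∧
    ((∀ k : ℕ, 0 < α (k + r)) ↔
      ((∀ i j, 1 ≤ i → i ≤ r + 1 → 1 ≤ j → j ≤ s →
          (i ≤ lam j → a i < b j) ∧ (lam j + 1 ≤ i → a i - 1 < b j)) ∧
        (1 ≤ s → lam s = r → 0 < (b s - a (r + 1)) / (b s - 1)))) := by
  have hrz : (1:ℤ) ≤ (r:ℤ) := by exact_mod_cast hr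
  have hPk : ∀ k : ℕ,
      0 < ∏ i ∈ (Finset.Icc 1 (r + 1)).erase (modIdx k (r + 1)), aShift r a (k : ℤ) i := by
    intro k
    apply Finset.prod_pos
    intro i hi
    have hi' := Finset.mem_Icc.mp (Finset.mem_of_mem_erase hi)
    exact aShift_pos' r a k i hi'.1 hi'.2 (ha i hi'.1 hi'.2)
  have hQk : ∀ k : ℕ, 0 < ∏ j ∈ Finset.Icc 1 s, bShift r lam b (k : ℤ) j := by
    intro k
    apply Finset.prod_pos
    intro j hj
    have hj' := Finset.mem_Icc.mp hj
    exact bShift_pos' r hr lam b k j (hlam1 j hj'.1 hj'.2).1 (hlam1 j hj'.1 hj'.2).2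
      (hbpos j hj'.1 hj'.2)
  -- the key analysis of the matched case
  have key : ∀ (k : ℕ) (ℓ : ℕ), 1 ≤ ℓ → ℓ ≤ s → modIdx k r = lam ℓ →
      ∃ (t m : ℤ) (i : ℕ), i = modIdx k (r+1) ∧ 1 ≤ i ∧ i ≤ r + 1 ∧
        (k:ℤ) - (lam ℓ : ℤ) = t * (r:ℤ) ∧
        ((r:ℤ)+1) * (m - t) = (lam ℓ : ℤ) - (i:ℤ) - t ∧
        (-1) ≤ t ∧
        (t = -1 → k = 0 ∧ lam ℓ = r ∧ ℓ = s ∧ i = r + 1 ∧ m = -1) ∧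
        (0 ≤ α (k + r) ↔ 0 ≤ (b ℓ + (t:ℝ) - a i - (m:ℝ)) / (b ℓ + (t:ℝ))) ∧
        (0 < α (k + r) ↔ 0 < (b ℓ + (t:ℝ) - a i - (m:ℝ)) / (b ℓ + (t:ℝ))) := by
    intro k ℓ hℓ1 hℓ2 hmod
    obtain ⟨hL1, hL2⟩ := hlam1 ℓ hℓ1 hℓ2
    obtain ⟨-, -, hdvd⟩ := modIdx_spec' k r hr
    rw [hmod] at hdvd
    obtain ⟨t, ht0⟩ := hdvd
    have ht : (k:ℤ) - (lam ℓ:ℤ) = t * (r:ℤ) := by linear_combination ht0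
    obtain ⟨hi1, hi2, hdvd2⟩ := modIdx_spec' k (r+1) (by omega)
    obtain ⟨m, hm0⟩ := hdvd2
    set i := modIdx k (r+1) with hidef
    have hm : (k:ℤ) - (i:ℤ) = m * ((r:ℤ)+1) := by push_cast at hm0; linear_combination hm0
    have hrel : ((r:ℤ)+1) * (m - t) = (lam ℓ : ℤ) - (i:ℤ) - t := by
      linear_combination ht - hm
    have htm1 : (-1:ℤ) ≤ t := by
      by_contra hc
      push_neg at hc
      have h2 : t ≤ -2 := by omega
      have h3 : t * (r:ℤ) ≤ (-2) * (r:ℤ) := by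
        apply mul_le_mul_of_nonneg_right h2 (by omega)
      have hk0 : (0:ℤ) ≤ (k:ℤ) := Int.natCast_nonneg k
      have hL2' : ((lam ℓ:ℕ):ℤ) ≤ (r:ℤ) := by exact_mod_cast hL2
      linarith
    have hspec : t = -1 → k = 0 ∧ lam ℓ = r ∧ ℓ = s ∧ i = r + 1 ∧ m = -1 := by
      intro htneg
      have ht2 := ht
      rw [htneg] at ht2
      have hk0 : k = 0 ∧ lam ℓ = r := by omega
      obtain ⟨hk0', hlr⟩ := hk0
      have hℓs : ℓ = s := by
        by_contra hc
        have hlt : ℓ < s := by omega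
        have hx1 := hlam2 ℓ s hℓ1 hlt le_rfl
        have hx2 := (hlam1 s (by omega) le_rfl).2
        omega
      have hieq : i = r + 1 := by
        rw [hidef, hk0']
        exact modIdx_eq' 0 (r+1) (r+1) (by omega) (by omega) le_rfl ⟨-1, by push_cast; ring⟩
      have hmeq : m = -1 := by
        have hrel2 := hrel
        rw [htneg, hieq, hlr] at hrel2
        push_cast at hrel2
        have h0 : ((r:ℤ)+1) * (m + 1) = 0 := by linear_combination hrel2
        rcases mul_eq_zero.mp h0 with h | h
        · omega
        · omega
      exact ⟨hk0', hlr, hℓs, hieq, hmeq⟩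
    have hB := bShift_eval' r hr lam b (k:ℤ) ℓ t ht
    have hA := aShift_eval' r a (k:ℤ) i m hm
    refine ⟨t, m, i, rfl, hi1, hi2, ht, hrel, htm1, hspec, ?_, ?_⟩
    · rw [hα2 k ℓ hℓ1 hℓ2 hmod, ← hidef, hB, hA]
      rw [show b ℓ + ((t:ℝ)+1) - (a i + ((m:ℝ)+1)) = b ℓ + (t:ℝ) - a i - (m:ℝ) by ring,
          show b ℓ + ((t:ℝ)+1) - 1 = b ℓ + (t:ℝ) by ring,
          mul_div_mul_comm]
      exact mul_nonneg_iff_of_pos_right (div_pos (hPk k) (hQk k))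
    · rw [hα2 k ℓ hℓ1 hℓ2 hmod, ← hidef, hB, hA]
      rw [show b ℓ + ((t:ℝ)+1) - (a i + ((m:ℝ)+1)) = b ℓ + (t:ℝ) - a i - (m:ℝ) by ring,
          show b ℓ + ((t:ℝ)+1) - 1 = b ℓ + (t:ℝ) by ring,
          mul_div_mul_comm]
      exact mul_pos_iff_of_pos_right (div_pos (hPk k) (hQk k))
  -- forward lemma 1 : i ≤ lam j
  have fwd1 : ∀ i j, 1 ≤ i → i ≤ r + 1 → 1 ≤ j → j ≤ s → i ≤ lam j →
      ((∀ k, 0 ≤ α (k + r)) → a i ≤ b j) ∧ ((∀ k, 0 < α (k + r)) → a i < b j) := by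
    intro i j hi1 hi2 hj1 hj2 hij
    obtain ⟨L1, L2⟩ := hlam1 j hj1 hj2
    set k : ℕ := lam j + (lam j - i) * r with hk
    have hki : (k:ℤ) = (lam j:ℤ) + ((lam j:ℤ) - (i:ℤ)) * (r:ℤ) := by
      rw [hk]; push_cast [Nat.cast_sub hij]; ring
    have hmod : modIdx k r = lam j :=
      modIdx_eq' k r (lam j) hr L1 L2 ⟨(lam j:ℤ) - i, by rw [hki]; ring⟩
    obtain ⟨t, m, i', hi'def, -, -, ht, hrel, -, -, hiff1, hiff2⟩ := key k j hj1 hj2 hmod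
    have hi' : i' = i := by
      rw [hi'def]
      exact modIdx_eq' k (r+1) i (by omega) hi1 hi2
        ⟨(lam j:ℤ) - i, by rw [hki]; push_cast; ring⟩
    have htv : t = (lam j:ℤ) - i := by
      have h0 : (t - ((lam j:ℤ) - i)) * (r:ℤ) = 0 := by linear_combination hki - ht
      rcases mul_eq_zero.mp h0 with h | h
      · omega
      · omega
    have hmv : m = (lam j:ℤ) - i := by
      rw [hi', htv] at hrel
      have h0 : ((r:ℤ)+1) * (m - ((lam j:ℤ) - i)) = 0 := by linear_combination hrel
      rcases mul_eq_zero.mp h0 with h | h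
      · omega
      · omega
    rw [hi', htv, hmv] at hiff1 hiff2
    have hden : (0:ℝ) < b j + (((lam j:ℤ) - (i:ℤ) : ℤ):ℝ) := by
      have hb0 := hbpos j hj1 hj2
      have hge : (0:ℝ) ≤ (((lam j:ℤ) - (i:ℤ) : ℤ):ℝ) := by
        have : (0:ℤ) ≤ (lam j:ℤ) - (i:ℤ) := by omega
        exact_mod_cast this
      linarith
    constructor
    · intro h
      have h1 := (le_div_iff₀ hden).mp (hiff1.mp (h k))
      linarith
    · intro h
      have h1 := (lt_div_iff₀ hden).mp (hiff2.mp (h k))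
      linarith
  -- forward lemma 2 : lam j + 1 ≤ i
  have fwd2 : ∀ i j, 1 ≤ i → i ≤ r + 1 → 1 ≤ j → j ≤ s → lam j + 1 ≤ i →
      ((∀ k, 0 ≤ α (k + r)) → a i - 1 ≤ b j) ∧ ((∀ k, 0 < α (k + r)) → a i - 1 < b j) := by
    intro i j hi1 hi2 hj1 hj2 hij
    obtain ⟨L1, L2⟩ := hlam1 j hj1 hj2
    set k : ℕ := lam j + (lam j + (r + 1) - i) * r with hk
    have hki : (k:ℤ) = (lam j:ℤ) + ((lam j:ℤ) + (r:ℤ) + 1 - (i:ℤ)) * (r:ℤ) := by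
      rw [hk]; push_cast [Nat.cast_sub (show i ≤ lam j + (r+1) by omega)]; ring
    have hmod : modIdx k r = lam j :=
      modIdx_eq' k r (lam j) hr L1 L2 ⟨(lam j:ℤ) + (r:ℤ) + 1 - i, by rw [hki]; ring⟩
    obtain ⟨t, m, i', hi'def, -, -, ht, hrel, -, -, hiff1, hiff2⟩ := key k j hj1 hj2 hmod
    have hi' : i' = i := by
      rw [hi'def]
      exact modIdx_eq' k (r+1) i (by omega) hi1 hi2
        ⟨(lam j:ℤ) + (r:ℤ) - i, by rw [hki]; push_cast; ring⟩
    have htv : t = (lam j:ℤ) + (r:ℤ) + 1 - i := by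
      have h0 : (t - ((lam j:ℤ) + (r:ℤ) + 1 - i)) * (r:ℤ) = 0 := by
        linear_combination hki - ht
      rcases mul_eq_zero.mp h0 with h | h
      · omega
      · omega
    have hmv : m = (lam j:ℤ) + (r:ℤ) - i := by
      rw [hi', htv] at hrel
      have h0 : ((r:ℤ)+1) * (m - ((lam j:ℤ) + (r:ℤ) - i)) = 0 := by linear_combination hrel
      rcases mul_eq_zero.mp h0 with h | h
      · omega
      · omega
    rw [hi', htv, hmv] at hiff1 hiff2
    have hden : (0:ℝ) < b j + (((lam j:ℤ) + (r:ℤ) + 1 - (i:ℤ) : ℤ):ℝ) := by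
      have hb0 := hbpos j hj1 hj2
      have hge : (0:ℝ) ≤ (((lam j:ℤ) + (r:ℤ) + 1 - (i:ℤ) : ℤ):ℝ) := by
        have : (0:ℤ) ≤ (lam j:ℤ) + (r:ℤ) + 1 - (i:ℤ) := by omega
        exact_mod_cast this
      linarith
    have hcast : (((lam j:ℤ) + (r:ℤ) + 1 - (i:ℤ) : ℤ):ℝ)
        = (((lam j:ℤ) + (r:ℤ) - (i:ℤ) : ℤ):ℝ) + 1 := by push_cast; ring
    constructor
    · intro h
      have h1 := (le_div_iff₀ hden).mp (hiff1.mp (h k))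
      rw [hcast] at h1
      linarith
    · intro h
      have h1 := (lt_div_iff₀ hden).mp (hiff2.mp (h k))
      rw [hcast] at h1
      linarith
  -- forward lemma 3 : the boundary condition
  have fwd3 : 1 ≤ s → lam s = r →
      ((∀ k, 0 ≤ α (k + r)) → 0 ≤ (b s - a (r+1))/(b s - 1)) ∧
      ((∀ k, 0 < α (k + r)) → 0 < (b s - a (r+1))/(b s - 1)) := by
    intro hs1 hlsr
    have hmod : modIdx 0 r = lam s := by
      rw [hlsr]; exact modIdx_eq' 0 r r hr hr le_rfl ⟨-1, by push_cast; ring⟩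
    obtain ⟨t, m, i', hi'def, -, -, ht, hrel, htm1, hspec, hiff1, hiff2⟩ :=
      key 0 s hs1 le_rfl hmod
    have htv : t = -1 := by
      have h0 : (t + 1) * (r:ℤ) = 0 := by
        rw [hlsr] at ht
        push_cast at ht
        linear_combination -ht
      rcases mul_eq_zero.mp h0 with h | h
      · omega
      · omega
    obtain ⟨-, -, -, hieq, hmeq⟩ := hspec htv
    rw [htv, hieq, hmeq] at hiff1 hiff2
    have hE : (b s + ((-1:ℤ):ℝ) - a (r+1) - ((-1:ℤ):ℝ)) / (b s + ((-1:ℤ):ℝ))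
        = (b s - a (r+1))/(b s - 1) := by push_cast; ring
    rw [hE] at hiff1 hiff2
    exact ⟨fun h => hiff1.mp (h 0), fun h => hiff2.mp (h 0)⟩
  -- backward, nonneg
  have bwd : (∀ i j, 1 ≤ i → i ≤ r + 1 → 1 ≤ j → j ≤ s →
        (i ≤ lam j → a i ≤ b j) ∧ (lam j + 1 ≤ i → a i - 1 ≤ b j)) →
      (1 ≤ s → lam s = r → 0 ≤ (b s - a (r+1))/(b s - 1)) →
      ∀ k : ℕ, 0 ≤ α (k + r) := by
    intro h1 h2 k
    by_cases hex : ∃ ℓ, 1 ≤ ℓ ∧ ℓ ≤ s ∧ modIdx k r = lam ℓ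
    · obtain ⟨ℓ, hℓ1, hℓ2, hmod⟩ := hex
      obtain ⟨hL1, hL2⟩ := hlam1 ℓ hℓ1 hℓ2
      obtain ⟨t, m, i, hidef, hi1, hi2, ht, hrel, htm1, hspec, hiff1, -⟩ :=
        key k ℓ hℓ1 hℓ2 hmod
      rcases eq_or_lt_of_le htm1 with hteq | htpos
      · obtain ⟨hk0, hlr, hls, hieq, hmeq⟩ := hspec hteq.symm
        rw [← hteq, hieq, hmeq, hls] at hiff1
        have hE : (b s + ((-1:ℤ):ℝ) - a (r+1) - ((-1:ℤ):ℝ)) / (b s + ((-1:ℤ):ℝ))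
            = (b s - a (r+1))/(b s - 1) := by push_cast; ring
        rw [hE] at hiff1
        exact hiff1.mpr (h2 (by omega) (hls ▸ hlr))
      · have ht0 : (0:ℤ) ≤ t := by omega
        apply hiff1.mpr
        have htr : (0:ℝ) ≤ (t:ℝ) := by exact_mod_cast ht0
        have hbt : (0:ℝ) < b ℓ + (t:ℝ) := by
          have := hbpos ℓ hℓ1 hℓ2
          linarith
        apply div_nonneg _ (le_of_lt hbt)
        by_cases hcase : i ≤ lam ℓ
        · have hab := (h1 i ℓ hi1 hi2 hℓ1 hℓ2).1 hcase
          have hmt : m ≤ t := by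
            by_contra hc
            push_neg at hc
            have h3 : ((r:ℤ)+1) * 1 ≤ ((r:ℤ)+1) * (m - t) :=
              mul_le_mul_of_nonneg_left (by omega) (by omega)
            rw [hrel] at h3
            omega
          have hmt' : (m:ℝ) ≤ (t:ℝ) := by exact_mod_cast hmt
          linarith
        · push_neg at hcase
          have hab := (h1 i ℓ hi1 hi2 hℓ1 hℓ2).2 (by omega)
          have hmt : m ≤ t - 1 := by
            by_contra hc
            push_neg at hc
            have h3 : (0:ℤ) ≤ ((r:ℤ)+1) * (m - t) := mul_nonneg (by omega) (by omega)
            rw [hrel] at h3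
            omega
          have hmt' : (m:ℝ) ≤ (t:ℝ) - 1 := by
            have : ((m:ℤ):ℝ) ≤ ((t - 1 : ℤ):ℝ) := by exact_mod_cast hmt
            push_cast at this
            linarith
          linarith
    · push_neg at hex
      rw [hα1 k hex]
      exact le_of_lt (div_pos (hPk k) (hQk k))
  -- backward, positive
  have bwdpos : (∀ i j, 1 ≤ i → i ≤ r + 1 → 1 ≤ j → j ≤ s →
        (i ≤ lam j → a i < b j) ∧ (lam j + 1 ≤ i → a i - 1 < b j)) →
      (1 ≤ s → lam s = r → 0 < (b s - a (r+1))/(b s - 1)) →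
      ∀ k : ℕ, 0 < α (k + r) := by
    intro h1 h2 k
    by_cases hex : ∃ ℓ, 1 ≤ ℓ ∧ ℓ ≤ s ∧ modIdx k r = lam ℓ
    · obtain ⟨ℓ, hℓ1, hℓ2, hmod⟩ := hex
      obtain ⟨hL1, hL2⟩ := hlam1 ℓ hℓ1 hℓ2
      obtain ⟨t, m, i, hidef, hi1, hi2, ht, hrel, htm1, hspec, -, hiff2⟩ :=
        key k ℓ hℓ1 hℓ2 hmod
      rcases eq_or_lt_of_le htm1 with hteq | htpos
      · obtain ⟨hk0, hlr, hls, hieq, hmeq⟩ := hspec hteq.symm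
        rw [← hteq, hieq, hmeq, hls] at hiff2
        have hE : (b s + ((-1:ℤ):ℝ) - a (r+1) - ((-1:ℤ):ℝ)) / (b s + ((-1:ℤ):ℝ))
            = (b s - a (r+1))/(b s - 1) := by push_cast; ring
        rw [hE] at hiff2
        exact hiff2.mpr (h2 (by omega) (hls ▸ hlr))
      · have ht0 : (0:ℤ) ≤ t := by omega
        apply hiff2.mpr
        have htr : (0:ℝ) ≤ (t:ℝ) := by exact_mod_cast ht0
        have hbt : (0:ℝ) < b ℓ + (t:ℝ) := by
          have := hbpos ℓ hℓ1 hℓ2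
          linarith
        apply div_pos _ hbt
        by_cases hcase : i ≤ lam ℓ
        · have hab := (h1 i ℓ hi1 hi2 hℓ1 hℓ2).1 hcase
          have hmt : m ≤ t := by
            by_contra hc
            push_neg at hc
            have h3 : ((r:ℤ)+1) * 1 ≤ ((r:ℤ)+1) * (m - t) :=
              mul_le_mul_of_nonneg_left (by omega) (by omega)
            rw [hrel] at h3
            omega
          have hmt' : (m:ℝ) ≤ (t:ℝ) := by exact_mod_cast hmt
          linarith
        · push_neg at hcase
          have hab := (h1 i ℓ hi1 hi2 hℓ1 hℓ2).2 (by omega)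
          have hmt : m ≤ t - 1 := by
            by_contra hc
            push_neg at hc
            have h3 : (0:ℤ) ≤ ((r:ℤ)+1) * (m - t) := mul_nonneg (by omega) (by omega)
            rw [hrel] at h3
            omega
          have hmt' : (m:ℝ) ≤ (t:ℝ) - 1 := by
            have : ((m:ℤ):ℝ) ≤ ((t - 1 : ℤ):ℝ) := by exact_mod_cast hmt
            push_cast at this
            linarith
          linarith
    · push_neg at hex
      rw [hα1 k hex]
      exact div_pos (hPk k) (hQk k)
  constructor
  · constructor
    · intro h
      refine ⟨fun i j hi1 hi2 hj1 hj2 => ⟨fun hij => (fwd1 i j hi1 hi2 hj1 hj2 hij).1 h,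
        fun hij => (fwd2 i j hi1 hi2 hj1 hj2 hij).1 h⟩, fun hs1 hlsr => (fwd3 hs1 hlsr).1 h⟩
    · intro hc
      exact bwd hc.1 hc.2
  · constructor
    · intro h
      refine ⟨fun i j hi1 hi2 hj1 hj2 => ⟨fun hij => (fwd1 i j hi1 hi2 hj1 hj2 hij).2 h,
        fun hij => (fwd2 i j hi1 hi2 hj1 hj2 hij).2 h⟩, fun hs1 hlsr => (fwd3 hs1 hlsr).2 h⟩
    · intro hc
      exact bwdpos hc.1 hc.2
end

section
/- Let r, s ∈ ℕ with 1 ≤ s ≤ r or s = 0 ≤ r, r ≥ 1, let 1 ≤ λ_1 < ⋯ < λ_s ≤ r, and let a_1,…,a_r, b_1,…,b_s be positive real numbers satisfying b_j > a_i whenever i ≤ λ_j and b_j > a_i − 1 whenever i ≥ λ_j + 1 (for all 1 ≤ i ≤ r, 1 ≤ j ≤ s). Let P_n(x) = Σ_{k=0}^{n} (−1)^k C(n,k) [ ∏_{i=1}^{r} (a_i + n − k)_k / ∏_{j=1}^{s} (b_j^{(n−1)} + n − k)_k ] x^{n−k} with b_j^{(n−1)} = b_j + ⌈(n−λ_j)/r⌉.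 Define F : ℂ → ℂ by F(z) = Σ_{k=0}^{∞} (−z/r^s)^k / ( k! · ∏_{i=1}^{r} (a_i)_k ) (the entire function 0F_r(; a_1,…,a_r; −z/r^s)). Then the sequence of functions z ↦ (−1)^n [ ∏_{j=1}^{s} (b_j^{(n−1)})_n / ∏_{i=1}^{r} (a_i)_n ] · P_n(z / n^{s+1}) converges to F as n → ∞, uniformly on every compact subset of ℂ. -/
open Finset Polynomial Filter

/-- The type II multiple orthogonal polynomials on the step-line (case `r ≥ s`, `m = r`):
`P_n(x) = Σ_{k=0}^{n} (−1)^k C(n,k) [∏_i (a_i+n−k)_k / ∏_j (b_j^{(n−1)}+n−k)_k] x^{n−k}`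
with `b_j^{(n−1)} = b_j + ⌈(n−λ_j)/r⌉`. -/
noncomputable def polyP (r s : ℕ) (lam : ℕ → ℕ) (a b : ℕ → ℝ) (n : ℕ) : Polynomial ℝ :=
  ∑ k ∈ Finset.range (n + 1),
    Polynomial.C ((-1) ^ k * (n.choose k : ℝ) *
        (∏ i ∈ Finset.Icc 1 r,
          (ascPochhammer ℝ k).eval (a i + ((n - k : ℕ) : ℝ))) /
        ∏ j ∈ Finset.Icc 1 s,
          (ascPochhammer ℝ k).eval
            (b j + ((⌈(((n : ℤ) - (lam j : ℤ) : ℤ) : ℚ) / (r : ℚ)⌉ : ℤ) : ℝ) +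
              ((n - k : ℕ) : ℝ))) *
      Polynomial.X ^ (n - k)

open Topology


lemma asc_prod (m : ℕ) (x : ℝ) :
    (ascPochhammer ℝ m).eval x = ∏ t ∈ Finset.range m, (x + t) := by
  induction m with
  | zero => simp
  | succ m ih => rw [ascPochhammer_succ_eval, ih, Finset.prod_range_succ]

lemma asc_split (m n : ℕ) (h : m ≤ n) (x : ℝ) :
    (ascPochhammer ℝ n).eval x
      = (ascPochhammer ℝ m).eval x * (ascPochhammer ℝ (n - m)).eval (x + m) := by
  have h2 := congrArg (Polynomial.eval x) (ascPochhammer_mul (S := ℝ) m (n - m))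
  rw [Nat.add_sub_cancel' h] at h2
  simpa [Polynomial.eval_mul, Polynomial.eval_comp] using h2.symm

lemma asc_le_pow (m : ℕ) (x : ℝ) (hx : 0 ≤ x) :
    (ascPochhammer ℝ m).eval x ≤ (x + m) ^ m := by
  rw [asc_prod]
  calc ∏ t ∈ Finset.range m, (x + t) ≤ ∏ t ∈ Finset.range m, (x + m) := by
        apply Finset.prod_le_prod
        · intro t _; positivity
        · intro t ht
          have h1 : (t : ℝ) ≤ m := by exact_mod_cast (Finset.mem_range.mp ht).le
          linarith
    _ = (x + m) ^ m := by rw [Finset.prod_const, Finset.card_range]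

lemma cast_choose_eq (n m : ℕ) (h : m ≤ n) :
    (n.choose m : ℝ) = (∏ i ∈ Finset.range m, ((n : ℝ) - i)) / m.factorial := by
  have h1 : (n.descFactorial m : ℝ) = ∏ i ∈ Finset.range m, ((n : ℝ) - i) := by
    rw [Nat.descFactorial_eq_prod_range, Nat.cast_prod]
    apply Finset.prod_congr rfl
    intro i hi
    have hi' : i ≤ n := le_trans (Finset.mem_range.mp hi).le h
    push_cast [Nat.cast_sub hi']
    ring
  have h2 : (n.descFactorial m : ℝ) = (m.factorial : ℝ) * n.choose m := by
    exact_mod_cast congrArg (Nat.cast (R := ℝ)) (Nat.descFactorial_eq_factorial_mul_choose n m)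
  have hf : (m.factorial : ℝ) ≠ 0 := by positivity
  rw [h2] at h1
  field_simp [← h1]
  rw [← h1]; ring

lemma choose_div_pow_tendsto (m : ℕ) :
    Tendsto (fun n : ℕ => (n.choose m : ℝ) / (n : ℝ) ^ m) atTop
      (𝓝 (1 / m.factorial)) := by
  have key : ∀ᶠ n : ℕ in atTop, (∏ i ∈ Finset.range m, (1 - (i : ℝ) / n)) / m.factorial
      = (n.choose m : ℝ) / (n : ℝ) ^ m := by
    filter_upwards [eventually_ge_atTop (max m 1)] with n hn
    have hm : m ≤ n := le_trans (le_max_left _ _) hn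
    have hn0 : (n : ℝ) ≠ 0 := by
      have : 1 ≤ n := le_trans (le_max_right _ _) hn
      positivity
    have hprod : ∏ i ∈ Finset.range m, ((n : ℝ) - i)
        = (∏ i ∈ Finset.range m, (1 - (i : ℝ) / n)) * (n : ℝ) ^ m := by
      rw [← Finset.card_range m, ← Finset.prod_const, Finset.card_range,
        ← Finset.prod_mul_distrib]
      apply Finset.prod_congr rfl
      intro i _
      field_simp
    rw [cast_choose_eq n m hm, hprod]
    field_simp
    try ring
    try tauto
  apply Tendsto.congr' key
  have h1 : Tendsto (fun n : ℕ => ∏ i ∈ Finset.range m, (1 - (i : ℝ) / n)) atTop (𝓝 1) := by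
    have := Finset.prod_const (b := (1:ℝ)) (s := Finset.range m)
    rw [← show (∏ _i ∈ Finset.range m, (1:ℝ)) = 1 by simp]
    apply tendsto_finset_prod
    intro i _
    have : Tendsto (fun n : ℕ => (i : ℝ) / n) atTop (𝓝 0) := by
      simpa [div_eq_mul_inv] using (tendsto_one_div_atTop_nhds_zero_nat).const_mul (i:ℝ)
    simpa using tendsto_const_nhds.sub this
  simpa using h1.div_const (m.factorial : ℝ)


lemma ceil_lb (r L n : ℕ) :
    ((n:ℝ) - L)/r ≤ ((⌈(((n : ℤ) - (L : ℤ) : ℤ) : ℚ) / (r : ℚ)⌉ : ℤ) : ℝ) := by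
  have h := Int.le_ceil ((((n : ℤ) - (L : ℤ) : ℤ) : ℚ) / (r : ℚ))
  have h2 : ((((((n : ℤ) - (L : ℤ) : ℤ) : ℚ) / (r : ℚ)) : ℝ))
      ≤ (((⌈(((n : ℤ) - (L : ℤ) : ℤ) : ℚ) / (r : ℚ)⌉ : ℤ) : ℚ) : ℝ) := by exact_mod_cast h
  push_cast at h2 ⊢
  linarith

lemma ceil_ub (r L n : ℕ) :
    ((⌈(((n : ℤ) - (L : ℤ) : ℤ) : ℚ) / (r : ℚ)⌉ : ℤ) : ℝ) ≤ ((n:ℝ) - L)/r + 1 := by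
  have h := (Int.ceil_lt_add_one ((((n : ℤ) - (L : ℤ) : ℤ) : ℚ) / (r : ℚ))).le
  have h2 : (((⌈(((n : ℤ) - (L : ℤ) : ℤ) : ℚ) / (r : ℚ)⌉ : ℤ) : ℚ) : ℝ)
      ≤ ((((((n : ℤ) - (L : ℤ) : ℤ) : ℚ) / (r : ℚ) + 1) : ℚ) : ℝ) := by exact_mod_cast h
  push_cast at h2 ⊢
  linarith

lemma ceil_div_tendsto (r : ℕ) (hr : 1 ≤ r) (L : ℕ) :
    Tendsto (fun n : ℕ => ((⌈(((n : ℤ) - (L : ℤ) : ℤ) : ℚ) / (r : ℚ)⌉ : ℤ) : ℝ) / n) atTop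
      (𝓝 (1/r)) := by
  have hr0 : (0:ℝ) < r := by exact_mod_cast hr
  have hinv : Tendsto (fun n : ℕ => 1/(n:ℝ)) atTop (𝓝 0) := tendsto_one_div_atTop_nhds_zero_nat
  have hg : Tendsto (fun n : ℕ => 1/(r:ℝ) - ((L:ℝ)/r) * (1/n)) atTop (𝓝 (1/r)) := by
    simpa using tendsto_const_nhds.sub (hinv.const_mul ((L:ℝ)/r))
  have hh : Tendsto (fun n : ℕ => 1/(r:ℝ) - ((L:ℝ)/r) * (1/n) + 1/n) atTop (𝓝 (1/r)) := by
    simpa using hg.add hinv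
  apply tendsto_of_tendsto_of_tendsto_of_le_of_le' hg hh
  · filter_upwards [eventually_ge_atTop 1] with n hn
    have hn0 : (0:ℝ) < n := by exact_mod_cast hn
    have := ceil_lb r L n
    have heq : (((n:ℝ) - L)/r) / n = 1/(r:ℝ) - ((L:ℝ)/r) * (1/n) := by
      field_simp
    rw [← heq]
    gcongr
  · filter_upwards [eventually_ge_atTop 1] with n hn
    have hn0 : (0:ℝ) < n := by exact_mod_cast hn
    have := ceil_ub r L n
    have heq : (((n:ℝ) - L)/r + 1) / n = 1/(r:ℝ) - ((L:ℝ)/r) * (1/n) + 1/n := by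
      field_simp
    rw [← heq]
    gcongr


noncomputable def cA (r : ℕ) (a : ℕ → ℝ) (m : ℕ) : ℝ :=
  ∏ i ∈ Finset.Icc 1 r, (ascPochhammer ℝ m).eval (a i)

noncomputable def Bco (r : ℕ) (lam : ℕ → ℕ) (b : ℕ → ℝ) (j n : ℕ) : ℝ :=
  b j + ((⌈(((n : ℤ) - (lam j : ℤ) : ℤ) : ℚ) / (r : ℚ)⌉ : ℤ) : ℝ)

noncomputable def cB (r s : ℕ) (lam : ℕ → ℕ) (b : ℕ → ℝ) (n m : ℕ) : ℝ :=
  ∏ j ∈ Finset.Icc 1 s, (ascPochhammer ℝ m).eval (Bco r lam b j n)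

noncomputable def dco (r s : ℕ) (lam : ℕ → ℕ) (a b : ℕ → ℝ) (n m : ℕ) : ℝ :=
  (n.choose m : ℝ) * cB r s lam b n m / (cA r a m * (n:ℝ)^((s+1)*m))


lemma cA_pos (r : ℕ) (a : ℕ → ℝ) (ha : ∀ i, 1 ≤ i → i ≤ r → 0 < a i) (m : ℕ) :
    0 < cA r a m := by
  apply Finset.prod_pos
  intro i hi
  obtain ⟨h1, h2⟩ := Finset.mem_Icc.mp hi
  exact ascPochhammer_pos m (a i) (ha i h1 h2)

lemma Bco_pos (r : ℕ) (lam : ℕ → ℕ) (b : ℕ → ℝ) (j n : ℕ)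
    (hbj : 0 < b j) (hln : lam j ≤ n) : 0 < Bco r lam b j n := by
  have h1 := ceil_lb r (lam j) n
  have h2 : (0:ℝ) ≤ ((n:ℝ) - lam j)/r := by
    apply div_nonneg _ (by positivity)
    have : (lam j : ℝ) ≤ n := by exact_mod_cast hln
    linarith
  unfold Bco
  linarith

lemma cB_pos (r s : ℕ) (lam : ℕ → ℕ) (b : ℕ → ℝ)
    (hb : ∀ j, 1 ≤ j → j ≤ s → 0 < b j) (hlam : ∀ j, 1 ≤ j → j ≤ s → lam j ≤ r)
    (n m : ℕ) (hn : r ≤ n) : 0 < cB r s lam b n m := by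
  apply Finset.prod_pos
  intro j hj
  obtain ⟨h1, h2⟩ := Finset.mem_Icc.mp hj
  exact ascPochhammer_pos m _ (Bco_pos r lam b j n (hb j h1 h2) (le_trans (hlam j h1 h2) hn))

lemma keyid (r s : ℕ) (lam : ℕ → ℕ) (a b : ℕ → ℝ)
    (ha : ∀ i, 1 ≤ i → i ≤ r → 0 < a i) (hb : ∀ j, 1 ≤ j → j ≤ s → 0 < b j)
    (hlam : ∀ j, 1 ≤ j → j ≤ s → lam j ≤ r)
    (n : ℕ) (hn : r ≤ n) (hn1 : 1 ≤ n) (z : ℂ) :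
    (-1:ℂ)^n * ((cB r s lam b n n / cA r a n : ℝ) : ℂ) *
      Polynomial.aeval (z / (n:ℂ)^(s+1)) (polyP r s lam a b n)
    = ∑ m ∈ Finset.range (n+1), (((-1)^m * dco r s lam a b n m : ℝ) : ℂ) * z^m := by
  have hn0 : ((n:ℝ)) ≠ 0 := by positivity
  rw [polyP, map_sum, Finset.mul_sum, ← Finset.sum_range_reflect]
  apply Finset.sum_congr rfl
  intro m hm
  have hm' : m ≤ n := Nat.lt_succ_iff.mp (Finset.mem_range.mp hm)
  simp only [Nat.add_sub_cancel, map_mul, map_pow, aeval_C, aeval_X, Nat.sub_sub_self hm']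
  set PA : ℝ := ∏ i ∈ Finset.Icc 1 r, (ascPochhammer ℝ (n - m)).eval (a i + (m:ℝ)) with hPA
  set PB : ℝ := ∏ j ∈ Finset.Icc 1 s,
      (ascPochhammer ℝ (n - m)).eval (Bco r lam b j n + (m:ℝ)) with hPB
  have hPApos : 0 < PA := by
    apply Finset.prod_pos
    intro i hi
    obtain ⟨h1, h2⟩ := Finset.mem_Icc.mp hi
    have := ha i h1 h2
    exact ascPochhammer_pos _ _ (by positivity)
  have hPBpos : 0 < PB := by
    apply Finset.prod_pos
    intro j hj
    obtain ⟨h1, h2⟩ := Finset.mem_Icc.mp hj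
    have := Bco_pos r lam b j n (hb j h1 h2) (le_trans (hlam j h1 h2) hn)
    exact ascPochhammer_pos _ _ (by positivity)
  have hcAm : 0 < cA r a m := cA_pos r a ha m
  have hcAn : cA r a n = cA r a m * PA := by
    simp only [cA, hPA]
    rw [← Finset.prod_mul_distrib]
    exact Finset.prod_congr rfl fun i _ => asc_split m n hm' (a i)
  have hcBn : cB r s lam b n n = cB r s lam b n m * PB := by
    simp only [cB, hPB]
    rw [← Finset.prod_mul_distrib]
    exact Finset.prod_congr rfl fun j _ => asc_split m n hm' (Bco r lam b j n)
  have hch : (n.choose (n - m) : ℝ) = (n.choose m : ℝ) := by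
    exact_mod_cast congrArg (Nat.cast (R := ℝ)) (Nat.choose_symm hm')
  have hsgn : (-1:ℝ)^n * (-1:ℝ)^(n-m) = (-1:ℝ)^m := by
    rw [← pow_add]
    have h2 : n + (n - m) = 2*(n-m) + m := by omega
    rw [h2, pow_add, pow_mul]
    norm_num
  have hreal : (-1:ℝ)^n * (cB r s lam b n n / cA r a n) *
      ((-1)^(n-m) * (n.choose (n-m) : ℝ) * PA / PB) / ((n:ℝ)^((s+1)*m))
      = (-1)^m * dco r s lam a b n m := by
    rw [dco, hcAn, hcBn, hch]
    have e1 : (-1:ℝ)^n * (cB r s lam b n m * PB / (cA r a m * PA)) *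
        ((-1)^(n-m) * (n.choose m : ℝ) * PA / PB) / ((n:ℝ)^((s+1)*m))
        = ((-1:ℝ)^n * (-1)^(n-m)) * ((n.choose m : ℝ) * cB r s lam b n m /
            (cA r a m * (n:ℝ)^((s+1)*m))) * (PA/PA) * (PB/PB) := by
      field_simp
    rw [e1, hsgn, div_self hPApos.ne', div_self hPBpos.ne', mul_one, mul_one, mul_div_assoc]
  have hw : ((n:ℂ)^(s+1))^m = (((n:ℝ)^((s+1)*m) : ℝ) : ℂ) := by
    push_cast
    rw [← pow_mul]
  calc (-1:ℂ)^n * ((cB r s lam b n n / cA r a n : ℝ) : ℂ) *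
        ((((-1)^(n-m) * (n.choose (n-m) : ℝ) * PA / PB : ℝ) : ℂ) * (z / (n:ℂ)^(s+1))^m)
      = (((-1:ℝ)^n * (cB r s lam b n n / cA r a n) *
          ((-1)^(n-m) * (n.choose (n-m) : ℝ) * PA / PB) / ((n:ℝ)^((s+1)*m)) : ℝ) : ℂ) * z^m := by
        rw [div_pow, hw]
        push_cast
        ring
    _ = (((-1)^m * dco r s lam a b n m : ℝ) : ℂ) * z^m := by rw [hreal]


noncomputable def tgt (r s : ℕ) (a : ℕ → ℝ) (m : ℕ) : ℝ :=
  (1/(r:ℝ)^s)^m / (m.factorial * cA r a m)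

lemma dco_tendsto (r s : ℕ) (hr : 1 ≤ r) (lam : ℕ → ℕ) (a b : ℕ → ℝ)
    (ha : ∀ i, 1 ≤ i → i ≤ r → 0 < a i) (m : ℕ) :
    Tendsto (fun n : ℕ => dco r s lam a b n m) atTop (𝓝 (tgt r s a m)) := by
  have hcAm : 0 < cA r a m := cA_pos r a ha m
  have key : ∀ᶠ n : ℕ in atTop,
      ((n.choose m : ℝ)/(n:ℝ)^m) *
        (∏ j ∈ Finset.Icc 1 s, (ascPochhammer ℝ m).eval (Bco r lam b j n)/(n:ℝ)^m) *
        (1 / cA r a m)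
      = dco r s lam a b n m := by
    filter_upwards [eventually_ge_atTop 1] with n hn
    have hn0 : ((n:ℝ)) ≠ 0 := by positivity
    have hpow : (n:ℝ)^((s+1)*m) = (n:ℝ)^m * ((n:ℝ)^m)^s := by
      rw [← pow_mul, ← pow_add]
      congr 1
      ring
    rw [dco, hpow, Finset.prod_div_distrib, Finset.prod_const, Nat.card_Icc]
    simp only [cB, Nat.add_sub_cancel]
    field_simp
    try ring
    try tauto
  apply Tendsto.congr' key
  have h1 := choose_div_pow_tendsto m
  have h2 : ∀ j, Tendsto (fun n : ℕ =>
      (ascPochhammer ℝ m).eval (Bco r lam b j n)/(n:ℝ)^m) atTop (𝓝 ((1/(r:ℝ))^m)) := by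
    intro j
    have heq : ∀ n : ℕ, (ascPochhammer ℝ m).eval (Bco r lam b j n)/(n:ℝ)^m
        = ∏ t ∈ Finset.range m, ((Bco r lam b j n + t)/(n:ℝ)) := by
      intro n
      rw [asc_prod, Finset.prod_div_distrib, Finset.prod_const, Finset.card_range]
    simp only [heq]
    have hlim : ∀ t : ℕ, Tendsto (fun n : ℕ => (Bco r lam b j n + t)/(n:ℝ)) atTop
        (𝓝 (1/(r:ℝ))) := by
      intro t
      have heq2 : (fun n : ℕ => (Bco r lam b j n + t)/(n:ℝ))
          = fun n : ℕ => ((⌈(((n : ℤ) - (lam j : ℤ) : ℤ) : ℚ) / (r : ℚ)⌉ : ℤ) : ℝ) / n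
              + (b j + t) * (1/n) := by
        funext n
        rw [Bco]
        ring
      rw [heq2]
      simpa using (ceil_div_tendsto r hr (lam j)).add
        (tendsto_one_div_atTop_nhds_zero_nat.const_mul (b j + (t:ℝ)))
    have := tendsto_finset_prod (Finset.range m)
      (fun t _ => hlim t)
    simpa [Finset.prod_const] using this
  have h3 := tendsto_finset_prod (Finset.Icc 1 s) (fun j (_ : j ∈ Finset.Icc 1 s) => h2 j)
  have h4 := (h1.mul h3).mul (tendsto_const_nhds (x := 1 / cA r a m))
  have hconst : 1/(m.factorial : ℝ) * (∏ _j ∈ Finset.Icc 1 s, (1/(r:ℝ))^m) * (1/cA r a m)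
      = tgt r s a m := by
    rw [Finset.prod_const, Nat.card_Icc, Nat.add_sub_cancel, tgt]
    have : ((1/(r:ℝ))^m)^s = (1/(r:ℝ)^s)^m := by
      rw [one_div, one_div, ← inv_pow]
      exact pow_right_comm _ _ _
    rw [this]
    field_simp
  rw [hconst] at h4
  exact h4

lemma dco_nonneg (r s : ℕ) (lam : ℕ → ℕ) (a b : ℕ → ℝ)
    (ha : ∀ i, 1 ≤ i → i ≤ r → 0 < a i) (hb : ∀ j, 1 ≤ j → j ≤ s → 0 < b j)
    (hlam : ∀ j, 1 ≤ j → j ≤ s → lam j ≤ r) (n m : ℕ) (hn : r ≤ n) :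
    0 ≤ dco r s lam a b n m := by
  have h1 := cB_pos r s lam b hb hlam n m hn
  have h2 := cA_pos r a ha m
  apply div_nonneg
  · positivity
  · positivity

lemma tgt_nonneg (r s : ℕ) (a : ℕ → ℝ) (ha : ∀ i, 1 ≤ i → i ≤ r → 0 < a i) (m : ℕ) :
    0 ≤ tgt r s a m := by
  have := cA_pos r a ha m
  rw [tgt]
  positivity

lemma dco_le_bound (r s : ℕ) (hr : 1 ≤ r) (lam : ℕ → ℕ) (a b : ℕ → ℝ)
    (ha : ∀ i, 1 ≤ i → i ≤ r → 0 < a i) (hb : ∀ j, 1 ≤ j → j ≤ s → 0 < b j)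
    (hlam : ∀ j, 1 ≤ j → j ≤ s → lam j ≤ r) (n m : ℕ) (hn : r ≤ n) (hn1 : 1 ≤ n)
    (hm : m ≤ n) :
    dco r s lam a b n m
      ≤ (3 + ∑ j ∈ Finset.Icc 1 s, b j)^(s*m) / (m.factorial * cA r a m) := by
  set Kc : ℝ := 3 + ∑ j ∈ Finset.Icc 1 s, b j with hKc
  have hbsum : 0 ≤ ∑ j ∈ Finset.Icc 1 s, b j :=
    Finset.sum_nonneg fun j hj => by
      obtain ⟨h1, h2⟩ := Finset.mem_Icc.mp hj
      exact (hb j h1 h2).le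
  have hKc1 : (1:ℝ) ≤ Kc := by rw [hKc]; linarith
  have hcAm := cA_pos r a ha m
  have hnR : (1:ℝ) ≤ (n:ℝ) := by exact_mod_cast hn1
  have hSle : ∀ j, j ∈ Finset.Icc 1 s → b j ≤ ∑ j' ∈ Finset.Icc 1 s, b j' := by
    intro j hj
    apply Finset.single_le_sum (fun j' hj' => ?_) hj
    obtain ⟨h1, h2⟩ := Finset.mem_Icc.mp hj'
    exact (hb j' h1 h2).le
  have hch : (n.choose m : ℝ) ≤ (n:ℝ)^m / m.factorial := by
    rw [le_div_iff₀ (by positivity)]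
    have h := Nat.descFactorial_le_pow n m
    rw [Nat.descFactorial_eq_factorial_mul_choose] at h
    rw [mul_comm]
    exact_mod_cast h
  have hcB : cB r s lam b n m ≤ (((n:ℝ) * Kc)^m)^s := by
    calc cB r s lam b n m
        ≤ ∏ _j ∈ Finset.Icc 1 s, ((n:ℝ)*Kc)^m := by
          apply Finset.prod_le_prod
          · intro j hj
            obtain ⟨h1, h2⟩ := Finset.mem_Icc.mp hj
            exact (ascPochhammer_pos m _
              (Bco_pos r lam b j n (hb j h1 h2) (le_trans (hlam j h1 h2) hn))).le
          · intro j hj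
            obtain ⟨h1, h2⟩ := Finset.mem_Icc.mp hj
            have hBpos := Bco_pos r lam b j n (hb j h1 h2) (le_trans (hlam j h1 h2) hn)
            have hstep1 := asc_le_pow m (Bco r lam b j n) hBpos.le
            have hBm : Bco r lam b j n + m ≤ (n:ℝ) * Kc := by
              have hub := ceil_ub r (lam j) n
              have hlam0 : (0:ℝ) ≤ lam j := by positivity
              have hlamn : (lam j : ℝ) ≤ n := by
                have := le_trans (hlam j h1 h2) hn
                exact_mod_cast this
              have hdiv : ((n:ℝ) - lam j)/r ≤ (n:ℝ) - lam j := by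
                apply div_le_self (by linarith) (by exact_mod_cast hr)
              have hmn : (m:ℝ) ≤ n := by exact_mod_cast hm
              have hbj := hSle j hj
              have hbj0 := (hb j h1 h2).le
              have hnS : (∑ j' ∈ Finset.Icc 1 s, b j') ≤ (n:ℝ) * (∑ j' ∈ Finset.Icc 1 s, b j') := by
                nlinarith
              rw [Bco, hKc]
              nlinarith
            calc (ascPochhammer ℝ m).eval (Bco r lam b j n) ≤ (Bco r lam b j n + m)^m := hstep1
              _ ≤ ((n:ℝ)*Kc)^m := by
                  apply pow_le_pow_left₀ (by positivity) hBm
      _ = (((n:ℝ)*Kc)^m)^s := by rw [Finset.prod_const, Nat.card_Icc, Nat.add_sub_cancel]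
  have halg : (n:ℝ)^m * (((n:ℝ)*Kc)^m)^s = Kc^(s*m) * (n:ℝ)^((s+1)*m) := by
    rw [← pow_mul, mul_pow, show (s+1)*m = m + m*s by ring, show s*m = m*s by ring, pow_add]
    ring
  have hcBnn := (cB_pos r s lam b hb hlam n m hn).le
  rw [dco, div_le_div_iff₀ (by positivity) (by positivity)]
  calc (n.choose m : ℝ) * cB r s lam b n m * (m.factorial * cA r a m)
      ≤ ((n:ℝ)^m / m.factorial) * (((n:ℝ)*Kc)^m)^s * (m.factorial * cA r a m) := by
        apply mul_le_mul_of_nonneg_right _ (by positivity)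
        apply mul_le_mul hch hcB hcBnn (by positivity)
    _ = Kc^(s*m) * (cA r a m * (n:ℝ)^((s+1)*m)) := by
        have hf : (m.factorial:ℝ) ≠ 0 := by positivity
        field_simp
        linear_combination halg

lemma tgt_le_bound (r s : ℕ) (hr : 1 ≤ r) (a b : ℕ → ℝ)
    (ha : ∀ i, 1 ≤ i → i ≤ r → 0 < a i) (hb : ∀ j, 1 ≤ j → j ≤ s → 0 < b j) (m : ℕ) :
    tgt r s a m ≤ (3 + ∑ j ∈ Finset.Icc 1 s, b j)^(s*m) / (m.factorial * cA r a m) := by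
  have hcAm := cA_pos r a ha m
  have hbsum : 0 ≤ ∑ j ∈ Finset.Icc 1 s, b j :=
    Finset.sum_nonneg fun j hj => by
      obtain ⟨h1, h2⟩ := Finset.mem_Icc.mp hj
      exact (hb j h1 h2).le
  have hKc1 : (1:ℝ) ≤ 3 + ∑ j ∈ Finset.Icc 1 s, b j := by linarith
  have hr1 : (1:ℝ) ≤ (r:ℝ) := by exact_mod_cast hr
  have hrs : (1:ℝ) ≤ (r:ℝ)^s := one_le_pow₀ hr1
  have hnum : (1/(r:ℝ)^s)^m ≤ (3 + ∑ j ∈ Finset.Icc 1 s, b j)^(s*m) :=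
    calc (1/(r:ℝ)^s)^m ≤ 1^m := by
          apply pow_le_pow_left₀ (by positivity)
          rw [div_le_one (by positivity)]
          exact hrs
      _ = 1 := one_pow m
      _ ≤ (3 + ∑ j ∈ Finset.Icc 1 s, b j)^(s*m) := one_le_pow₀ hKc1
  rw [tgt]
  gcongr

lemma bnd_summable (r s : ℕ) (hr : 1 ≤ r) (a : ℕ → ℝ)
    (ha : ∀ i, 1 ≤ i → i ≤ r → 0 < a i) (Kc R : ℝ) (hK : 1 ≤ Kc) (hR : 0 ≤ R) :
    Summable (fun m : ℕ => Kc^(s*m) / (m.factorial * cA r a m) * R^m) := by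
  set u : ℕ → ℝ := fun m => Kc^(s*m) / (m.factorial * cA r a m) * R^m with hu
  have hupos : ∀ m, 0 ≤ u m := by
    intro m
    have := cA_pos r a ha m
    positivity
  obtain ⟨M, hM⟩ := exists_nat_ge (2 * Kc^s * R)
  apply summable_of_ratio_norm_eventually_le (r := 1/2) (by norm_num)
  filter_upwards [eventually_ge_atTop (max M 1)] with m hm
  have hm1 : 1 ≤ m := le_trans (le_max_right _ _) hm
  have hmM : M ≤ m := le_trans (le_max_left _ _) hm
  have hmR : (1:ℝ) ≤ m := by exact_mod_cast hm1
  set P : ℝ := ∏ i ∈ Finset.Icc 1 r, (a i + m) with hP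
  have hPpos : 0 < P := Finset.prod_pos fun i hi => by
    obtain ⟨h1, h2⟩ := Finset.mem_Icc.mp hi
    have := ha i h1 h2
    positivity
  have hPge : (m:ℝ) ≤ P := by
    calc (m:ℝ) = (m:ℝ)^1 := (pow_one _).symm
      _ ≤ (m:ℝ)^r := pow_le_pow_right₀ hmR hr
      _ = ∏ _i ∈ Finset.Icc 1 r, (m:ℝ) := by rw [Finset.prod_const, Nat.card_Icc, Nat.add_sub_cancel]
      _ ≤ P := by
          apply Finset.prod_le_prod (fun i _ => by positivity)
          intro i hi
          obtain ⟨h1, h2⟩ := Finset.mem_Icc.mp hi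
          have := ha i h1 h2
          linarith
  have hcAsucc : cA r a (m+1) = cA r a m * P := by
    simp only [cA, hP]
    rw [← Finset.prod_mul_distrib]
    exact Finset.prod_congr rfl fun i _ => by rw [ascPochhammer_succ_eval]
  have hcAm := cA_pos r a ha m
  have hrel : u (m+1) = u m * (Kc^s * R / ((m+1) * P)) := by
    simp only [hu]
    rw [hcAsucc, Nat.factorial_succ, show s*(m+1) = s*m + s by ring, pow_add, pow_succ]
    push_cast
    field_simp
  have hq : Kc^s * R / ((m+1) * P) ≤ 1/2 := by
    rw [div_le_iff₀ (by positivity)]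
    have h1 : 2 * Kc^s * R ≤ m := le_trans hM (by exact_mod_cast hmM)
    have h2 : (m:ℝ) ≤ (m+1) * P := by nlinarith
    nlinarith [pow_nonneg (le_trans zero_le_one hK) s]
  have hqnn : 0 ≤ Kc^s * R / ((m+1) * P) := by positivity
  rw [Real.norm_of_nonneg (hupos _), Real.norm_of_nonneg (hupos _), hrel]
  calc u m * (Kc^s * R / ((m+1) * P)) ≤ u m * (1/2) := by
        exact mul_le_mul_of_nonneg_left hq (hupos m)
    _ = 1/2 * u m := by ring

/-- Mehler–Heine-type asymptotics near the origin: the rescaled polynomials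
`(−1)^n [∏_j (b_j^{(n−1)})_n / ∏_i (a_i)_n] · P_n(z/n^{s+1})` converge, uniformly on
compact subsets of `ℂ`, to the entire function `0F_r(; a_1,…,a_r; −z/r^s)`. -/
theorem stmt17 (r s : ℕ) (hr : 1 ≤ r) (hs : s ≤ r)
    (lam : ℕ → ℕ)
    (hlam1 : ∀ j, 1 ≤ j → j ≤ s → 1 ≤ lam j ∧ lam j ≤ r)
    (hlam2 : ∀ j j', 1 ≤ j → j < j' → j' ≤ s → lam j < lam j')
    (a b : ℕ → ℝ)
    (ha : ∀ i, 1 ≤ i → i ≤ r → 0 < a i)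
    (hb : ∀ j, 1 ≤ j → j ≤ s → 0 < b j)
    (hcond : ∀ i j, 1 ≤ i → i ≤ r → 1 ≤ j → j ≤ s →
      (i ≤ lam j → a i < b j) ∧ (lam j + 1 ≤ i → a i - 1 < b j)) :
    ∀ Kc : Set ℂ, IsCompact Kc →
      TendstoUniformlyOn
        (fun (n : ℕ) (z : ℂ) =>
          (-1 : ℂ) ^ n *
            (((∏ j ∈ Finset.Icc 1 s,
                (ascPochhammer ℝ n).eval
                  (b j + ((⌈(((n : ℤ) - (lam j : ℤ) : ℤ) : ℚ) / (r : ℚ)⌉ : ℤ) : ℝ))) /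
              ∏ i ∈ Finset.Icc 1 r, (ascPochhammer ℝ n).eval (a i) : ℝ) : ℂ) *
            Polynomial.aeval (z / (n : ℂ) ^ (s + 1)) (polyP r s lam a b n))
        (fun z => ∑' k : ℕ,
          (-z / (r : ℂ) ^ s) ^ k /
            ((k.factorial : ℂ) *
              ((∏ i ∈ Finset.Icc 1 r, (ascPochhammer ℝ k).eval (a i) : ℝ) : ℂ)))
        Filter.atTop Kc := by
  intro K hK
  have hlam' : ∀ j, 1 ≤ j → j ≤ s → lam j ≤ r := fun j h1 h2 => (hlam1 j h1 h2).2
  obtain ⟨R0, hR0⟩ := hK.isBounded.exists_norm_le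
  set R : ℝ := max R0 0 with hRdef
  have hR : 0 ≤ R := le_max_right _ _
  have hzR : ∀ z ∈ K, ‖z‖ ≤ R := fun z hz => le_trans (hR0 z hz) (le_max_left _ _)
  set Kb : ℝ := 3 + ∑ j ∈ Finset.Icc 1 s, b j with hKb
  have hbsum : 0 ≤ ∑ j ∈ Finset.Icc 1 s, b j :=
    Finset.sum_nonneg fun j hj => by
      obtain ⟨h1, h2⟩ := Finset.mem_Icc.mp hj
      exact (hb j h1 h2).le
  have hKb1 : (1:ℝ) ≤ Kb := by rw [hKb]; linarith
  set bnd : ℕ → ℝ := fun m => Kb^(s*m) / (m.factorial * cA r a m) * R^m with hbnd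
  have hbnd_nonneg : ∀ m, 0 ≤ bnd m := fun m => by
    have := cA_pos r a ha m
    positivity
  have hsum : Summable bnd := bnd_summable r s hr a ha Kb R hKb1 hR
  have hsum2 : Summable (fun m => 2 * bnd m) := hsum.mul_left 2
  set D : ℕ → ℕ → ℝ := fun n m => if m ≤ n then dco r s lam a b n m else 0 with hD
  set E : ℕ → ℕ → ℝ := fun n m => |tgt r s a m - D n m| * R^m with hE
  have hEbound : ∀ n, max r 1 ≤ n → ∀ m, E n m ≤ 2 * bnd m := by
    intro n hn m
    have hnr : r ≤ n := le_trans (le_max_left _ _) hn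
    have hn1 : 1 ≤ n := le_trans (le_max_right _ _) hn
    have htgt1 := tgt_nonneg r s a ha m
    have htgt2 := tgt_le_bound r s hr a b ha hb m
    rw [← hKb] at htgt2
    have hcAm := cA_pos r a ha m
    have hB0 : (0:ℝ) ≤ Kb^(s*m) / (m.factorial * cA r a m) := by positivity
    have hDb : 0 ≤ D n m ∧ D n m ≤ Kb^(s*m) / (m.factorial * cA r a m) := by
      by_cases hmn : m ≤ n
      · have heq : D n m = dco r s lam a b n m := by simp only [hD]; rw [if_pos hmn]
        rw [heq]
        exact ⟨dco_nonneg r s lam a b ha hb hlam' n m hnr,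
          dco_le_bound r s hr lam a b ha hb hlam' n m hnr hn1 hmn⟩
      · have heq : D n m = 0 := by simp only [hD]; rw [if_neg hmn]
        rw [heq]
        exact ⟨le_refl 0, hB0⟩
    obtain ⟨hD0, hD1⟩ := hDb
    have habs : |tgt r s a m - D n m| ≤ 2 * (Kb^(s*m) / (m.factorial * cA r a m)) := by
      rw [abs_le]
      constructor <;> linarith
    calc E n m = |tgt r s a m - D n m| * R^m := by simp only [hE]
      _ ≤ 2 * (Kb^(s*m) / (m.factorial * cA r a m)) * R^m :=
          mul_le_mul_of_nonneg_right habs (by positivity)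
      _ = 2 * bnd m := by simp only [hbnd]; ring
  have hT : Tendsto (fun n => ∑' m, E n m) atTop (𝓝 0) := by
    have h0 : (0:ℝ) = ∑' _m : ℕ, (0:ℝ) := tsum_zero.symm
    rw [h0]
    apply tendsto_tsum_of_dominated_convergence (bound := fun m => 2 * bnd m) hsum2
    · intro m
      have hev : ∀ᶠ n in atTop, |tgt r s a m - dco r s lam a b n m| * R^m = E n m := by
        filter_upwards [eventually_ge_atTop m] with n hn
        simp only [hE, hD]
        rw [if_pos hn]
      apply Tendsto.congr' hev
      have hlim := ((tendsto_const_nhds (x := tgt r s a m)).sub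
        (dco_tendsto r s hr lam a b ha m)).abs.mul_const (R^m)
      simpa using hlim
    · filter_upwards [eventually_ge_atTop (max r 1)] with n hn
      intro m
      have hEnn : 0 ≤ E n m := by
        simp only [hE]
        exact mul_nonneg (abs_nonneg _) (pow_nonneg hR m)
      rw [Real.norm_of_nonneg hEnn]
      exact hEbound n hn m
  rw [Metric.tendstoUniformlyOn_iff]
  intro ε hε
  filter_upwards [hT.eventually (gt_mem_nhds hε), eventually_ge_atTop (max r 1)] with n hTn hn
  intro z hz
  have hnr : r ≤ n := le_trans (le_max_left _ _) hn
  have hn1 : 1 ≤ n := le_trans (le_max_right _ _) hn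
  have hznorm : ‖z‖ ≤ R := hzR z hz
  set tz : ℕ → ℂ := fun m => (((-1)^m * tgt r s a m : ℝ) : ℂ) * z^m with htz
  set cz : ℕ → ℂ := fun m => (((-1)^m * D n m : ℝ) : ℂ) * z^m with hcz
  have hvanish : ∀ m ∉ Finset.range (n+1), cz m = 0 := by
    intro m hm
    have hmn : ¬ (m ≤ n) := by
      intro hc
      exact hm (Finset.mem_range.mpr (Nat.lt_succ_of_le hc))
    simp only [hcz, hD]
    rw [if_neg hmn]
    simp
  have hFz : (∑' k : ℕ, (-z / (r : ℂ) ^ s) ^ k /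
      ((k.factorial : ℂ) * ((∏ i ∈ Finset.Icc 1 r, (ascPochhammer ℝ k).eval (a i) : ℝ) : ℂ)))
      = ∑' m, tz m := by
    apply tsum_congr
    intro k
    have h1 : ((r:ℝ)) ≠ 0 := by positivity
    have h2 : (k.factorial:ℝ) ≠ 0 := by positivity
    simp only [htz, tgt, cA]
    push_cast
    rw [neg_div, neg_pow, div_pow]
    field_simp
    try ring
  have hid := keyid r s lam a b ha hb hlam' n hnr hn1 z
  simp only [cB, cA, Bco] at hid
  have hfz : (-1 : ℂ) ^ n *
      (((∏ j ∈ Finset.Icc 1 s, (ascPochhammer ℝ n).eval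
          (b j + ((⌈(((n : ℤ) - (lam j : ℤ) : ℤ) : ℚ) / (r : ℚ)⌉ : ℤ) : ℝ))) /
        ∏ i ∈ Finset.Icc 1 r, (ascPochhammer ℝ n).eval (a i) : ℝ) : ℂ) *
      Polynomial.aeval (z / (n : ℂ) ^ (s + 1)) (polyP r s lam a b n) = ∑' m, cz m := by
    rw [hid, tsum_eq_sum hvanish]
    apply Finset.sum_congr rfl
    intro m hm
    have hmn : m ≤ n := Nat.lt_succ_iff.mp (Finset.mem_range.mp hm)
    simp only [hcz, hD]
    rw [if_pos hmn]
  have htgt1 : ∀ m, 0 ≤ tgt r s a m := tgt_nonneg r s a ha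
  have hnormtz : ∀ m, ‖tz m‖ ≤ bnd m := by
    intro m
    have htgt2 := tgt_le_bound r s hr a b ha hb m
    simp only [htz]
    rw [norm_mul, norm_pow, Complex.norm_real, Real.norm_eq_abs, abs_mul, abs_pow, abs_neg,
      abs_one, one_pow, one_mul, abs_of_nonneg (htgt1 m)]
    simp only [hbnd]
    apply mul_le_mul htgt2 (pow_le_pow_left₀ (norm_nonneg z) hznorm m) (by positivity) ?_
    have := cA_pos r a ha m
    positivity
  have hstz : Summable tz := Summable.of_norm_bounded hsum hnormtz
  have hscz : Summable cz := summable_of_ne_finset_zero hvanish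
  have hnorm_sub : ∀ m, ‖tz m - cz m‖ ≤ E n m := by
    intro m
    have hsub : tz m - cz m = (((-1)^m * (tgt r s a m - D n m) : ℝ) : ℂ) * z^m := by
      simp only [htz, hcz]
      push_cast
      ring
    rw [hsub, norm_mul, norm_pow, Complex.norm_real, Real.norm_eq_abs, abs_mul, abs_pow,
      abs_neg, abs_one, one_pow, one_mul]
    simp only [hE]
    exact mul_le_mul_of_nonneg_left (pow_le_pow_left₀ (norm_nonneg z) hznorm m) (abs_nonneg _)
  have hsE : Summable (E n) :=
    Summable.of_nonneg_of_le
      (fun m => mul_nonneg (abs_nonneg _) (pow_nonneg hR m)) (hEbound n hn) hsum2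
  have hsnorm : Summable (fun m => ‖tz m - cz m‖) :=
    Summable.of_nonneg_of_le (fun m => norm_nonneg _) hnorm_sub hsE
  rw [dist_eq_norm, hFz, hfz, ← Summable.tsum_sub hstz hscz]
  calc ‖∑' m, (tz m - cz m)‖ ≤ ∑' m, ‖tz m - cz m‖ := norm_tsum_le_tsum_norm hsnorm
    _ ≤ ∑' m, E n m := Summable.tsum_le_tsum hnorm_sub hsnorm hsE
    _ < ε := hTn
end
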